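/- arXiv:2411.19776 — 11 statements merged into one kernel-verified Lean document; each statement's English description precedes it below -/
import Mathlib

section
/- Let G be a path-connected topological group acting continuously by homeomorphisms on a Hausdorff topological space X. If A ⊆ X is a subset whose topological frontier ∂A is compact, then for every g ∈ G the symmetric difference A △ (g·A) is relatively compact, i.e., its closure in X is compact. -/
open MeasureTheory Set Pointwise

lemma preconn_inter_frontier {X : Type*} [TopologicalSpace X] {s t : Set X}
    (hs : IsPreconnected s) (h1 : (s ∩ t).Nonempty) (h2 : (s ∩ tᶜ).Nonempty) :
    (s ∩ frontier t).Nonempty := by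
  by_contra h
  rw [Set.not_nonempty_iff_eq_empty] at h
  have hdisj : ∀ x ∈ s, x ∉ frontier t := fun x hx hxf =>
    Set.eq_empty_iff_forall_notMem.1 h x ⟨hx, hxf⟩
  have hsub : s ⊆ interior t ∪ (closure t)ᶜ := by
    intro x hx
    by_cases hxt : x ∈ closure t
    · left
      rcases (closure_eq_interior_union_frontier t ▸ hxt) with h' | h'
      · exact h'
      · exact absurd h' (hdisj x hx)
    · exact Or.inr hxt
  obtain ⟨y, hy, hy'⟩ := hs (interior t) (closure t)ᶜ isOpen_interior
    isClosed_closure.isOpen_compl hsub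
    (by obtain ⟨x, hxs, hxt⟩ := h1
        refine ⟨x, hxs, ?_⟩
        rcases (closure_eq_interior_union_frontier t ▸ subset_closure hxt) with h' | h'
        · exact h'
        · exact absurd h' (hdisj x hxs))
    (by obtain ⟨x, hxs, hxt⟩ := h2
        refine ⟨x, hxs, fun hc => ?_⟩
        rcases (closure_eq_interior_union_frontier t ▸ hc) with h' | h'
        · exact hxt (interior_subset h')
        · exact hdisj x hxs h')
  exact hy'.2 (interior_subset_closure hy'.1)

theorem stmt0 {G X : Type*} [Group G] [TopologicalSpace G] [IsTopologicalGroup G]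
    [PathConnectedSpace G]
    [TopologicalSpace X] [T2Space X] [MulAction G X] [ContinuousSMul G X]
    (A : Set X) (hA : IsCompact (frontier A)) (g : G) :
    IsCompact (closure (symmDiff A (g • A))) := by
  obtain ⟨γ⟩ := PathConnectedSpace.joined (1 : G) g
  set K : Set X := Set.image2 (fun (t : unitInterval) (x : X) => γ t • x) univ (frontier A)
    with hK
  have hKcomp : IsCompact K := by
    rw [hK, ← Set.image_prod]
    exact (isCompact_univ.prod hA).image <|
      (γ.continuous.comp continuous_fst).smul continuous_snd
  have hsub : symmDiff A (g • A) ⊆ K := by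
    intro x hx
    have key : ∃ t : unitInterval, (γ t)⁻¹ • x ∈ frontier A := by
      set f : unitInterval → X := fun t => (γ t)⁻¹ • x with hf
      have hfc : Continuous f := (γ.continuous.inv).smul continuous_const
      have hconn : IsPreconnected (range f) := by
        rw [← image_univ]
        exact isPreconnected_univ.image f hfc.continuousOn
      have h0 : f 0 = x := by simp [hf]
      have h1 : f 1 = g⁻¹ • x := by simp [hf]
      rw [Set.mem_symmDiff] at hx
      have hmem : x ∈ g • A ↔ g⁻¹ • x ∈ A := Set.mem_smul_set_iff_inv_smul_mem
      have hin : (range f ∩ A).Nonempty ∧ (range f ∩ Aᶜ).Nonempty := by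
        rcases hx with ⟨hxA, hxg⟩ | ⟨hxg, hxA⟩
        · exact ⟨⟨x, ⟨0, h0⟩, hxA⟩, ⟨g⁻¹ • x, ⟨1, h1⟩, fun h => hxg (hmem.2 h)⟩⟩
        · exact ⟨⟨g⁻¹ • x, ⟨1, h1⟩, hmem.1 hxg⟩, ⟨x, ⟨0, h0⟩, hxA⟩⟩
      obtain ⟨y, ⟨t, ht⟩, hy⟩ := preconn_inter_frontier hconn hin.1 hin.2
      exact ⟨t, show f t ∈ frontier A from ht ▸ hy⟩
    obtain ⟨t, ht⟩ := key
    exact ⟨t, trivial, (γ t)⁻¹ • x, ht, by simp⟩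
  exact hKcomp.of_isClosed_subset isClosed_closure
    (closure_minimal hsub hKcomp.isClosed)
end

section
/- Let G be a path-connected topological group acting continuously by homeomorphisms on a topological space X, let A ⊆ X, let g ∈ G, and let φ : [0,1] → G be a continuous path with φ(0) = e and φ(1) = g⁻¹. Then A \ (g·A) is contained in the set {φ(r)⁻¹·x : r ∈ [0,1], x ∈ ∂A}, which is the image of the compact set [0,1] × ∂A under the continuous map (r,x) ↦ φ(r)⁻¹·x; in particular, if ∂A is compact then A \ (g·A) is contained in a compact set. -/
open MeasureTheory Set Pointwise

theorem stmt1 {G X : Type*} [Group G] [TopologicalSpace G] [IsTopologicalGroup G]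
    [PathConnectedSpace G]
    [TopologicalSpace X] [MulAction G X] [ContinuousSMul G X]
    (A : Set X) (g : G) (φ : Set.Icc (0:ℝ) 1 → G) (hφ : Continuous φ)
    (hφ0 : φ ⟨0, Set.left_mem_Icc.mpr (by norm_num)⟩ = 1)
    (hφ1 : φ ⟨1, Set.right_mem_Icc.mpr (by norm_num)⟩ = g⁻¹) :
    A \ (g • A) ⊆ (fun p : Set.Icc (0:ℝ) 1 × X => (φ p.1)⁻¹ • p.2) '' (Set.univ ×ˢ frontier A)
      ∧ (IsCompact (frontier A) →
          ∃ K : Set X, IsCompact K ∧ A \ (g • A) ⊆ K) := by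
  have hmap : Continuous (fun p : Set.Icc (0:ℝ) 1 × X => (φ p.1)⁻¹ • p.2) :=
    ((hφ.comp continuous_fst).inv).smul continuous_snd
  have hsub : A \ (g • A) ⊆
      (fun p : Set.Icc (0:ℝ) 1 × X => (φ p.1)⁻¹ • p.2) '' (Set.univ ×ˢ frontier A) := by
    intro x hx
    obtain ⟨hxA, hxgA⟩ := hx
    set f : Set.Icc (0:ℝ) 1 → X := fun t => φ t • x with hf
    have hfc : Continuous f := hφ.smul continuous_const
    -- find t with f t ∈ frontier A
    by_contra hcon
    have hnot : ∀ t, f t ∉ frontier A := by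
      intro t ht
      exact hcon ⟨(t, f t), ⟨mem_univ _, ht⟩, by simp [f]⟩
    set S : Set (Set.Icc (0:ℝ) 1) := f ⁻¹' (closure A) with hS
    have hSc : IsClosed S := isClosed_closure.preimage hfc
    have hSint : S = f ⁻¹' (interior A) := by
      ext t
      constructor
      · intro ht
        rcases (closure_eq_interior_union_frontier A ▸ ht : f t ∈ interior A ∪ frontier A)
          with h | h
        · exact h
        · exact absurd h (hnot t)
      · intro ht
        exact subset_closure (interior_subset ht)
    have hSo : IsOpen S := hSint ▸ isOpen_interior.preimage hfc
    have h0 : (⟨0, Set.left_mem_Icc.mpr (by norm_num)⟩ : Set.Icc (0:ℝ) 1) ∈ S := by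
      show f _ ∈ closure A
      rw [hf]; simp only [hφ0, one_smul]
      exact subset_closure hxA
    have hall : S = univ :=
      (IsClopen.eq_univ ⟨hSc, hSo⟩ ⟨_, h0⟩ :)
    have h1 : (⟨1, Set.right_mem_Icc.mpr (by norm_num)⟩ : Set.Icc (0:ℝ) 1) ∈ S := by
      rw [hall]; trivial
    rw [hSint] at h1
    have : g⁻¹ • x ∈ A := by
      have h2 := interior_subset h1
      simp only [hf, hφ1] at h2
      exact h2
    exact hxgA (Set.mem_smul_set_iff_inv_smul_mem.mpr this)
  refine ⟨hsub, fun hfr => ?_⟩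
  exact ⟨_, (isCompact_univ.prod hfr).image hmap, hsub⟩
end

section
/- Let G be a locally compact second countable group acting continuously and transitively on a locally compact second countable Hausdorff space X, preserving a σ-finite Radon measure μ. Suppose B ⊆ X is a Borel set with μ(B) = ∞ and μ(X \ B) = ∞ such that μ(B △ g·B) < ∞ for every g ∈ G. Then for every g ∈ G the function c(g) := 1_B − 1_{g·B} lies in L²(X, μ), the map c satisfies the cocycle identity c(gh) = c(g) + g·c(h), and c is not a coboundary: there is no ξ ∈ L²(X, μ) such that c(g) = ξ − g·ξ in L²(X, μ) for every g ∈ G. In particular the first cohomology of G with coefficients in the Koopman representation on L²(X, μ) is nonzero. -/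
open MeasureTheory Set Pointwise

/-- Ergodicity of transitive actions (the only form we need): a measurable set that is
invariant modulo null sets under every group element cannot have both itself and its
complement of nonzero measure. -/
lemma no_invariant_set_aux {G X : Type*} [Group G] [TopologicalSpace G] [IsTopologicalGroup G]
    [LocallyCompactSpace G] [SecondCountableTopology G]
    [TopologicalSpace X] [SecondCountableTopology X]
    [MeasurableSpace X] [BorelSpace X]
    [MulAction G X] [ContinuousSMul G X] [MulAction.IsPretransitive G X]
    (μ : Measure X) [SigmaFinite μ]
    (A : Set X) (hA : MeasurableSet A) (hApos : μ A ≠ 0) (hAcpos : μ Aᶜ ≠ 0)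
    (hinv : ∀ g : G, μ (symmDiff A (g • A)) = 0) : False := by
  letI : MeasurableSpace G := borel G
  haveI : BorelSpace G := ⟨rfl⟩
  set lam : Measure G := Measure.haar with hlam
  have hact : Measurable fun p : X × G => p.2⁻¹ • p.1 :=
    ((continuous_snd.inv).smul continuous_fst).measurable
  have hT : MeasurableSet {p : X × G | p.2⁻¹ • p.1 ∈ A} := hact hA
  have hA1 : MeasurableSet {p : X × G | p.1 ∈ A} := measurable_fst hA
  set S : Set (X × G) :=
    ({p : X × G | p.1 ∈ A} \ {p : X × G | p.2⁻¹ • p.1 ∈ A}) ∪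
      ({p : X × G | p.2⁻¹ • p.1 ∈ A} \ {p : X × G | p.1 ∈ A}) with hSdef
  have hS : MeasurableSet S := (hA1.diff hT).union (hT.diff hA1)
  -- each g-slice of S is the symmetric difference A △ (g • A), hence null
  have hslice : ∀ g : G, (fun x => (x, g)) ⁻¹' S = symmDiff A (g • A) := by
    intro g
    ext x
    have hmem : x ∈ g • A ↔ g⁻¹ • x ∈ A := mem_smul_set_iff_inv_smul_mem
    simp only [hSdef, Set.symmDiff_def, Set.mem_preimage, Set.mem_union, Set.mem_diff,
      Set.mem_setOf_eq, Set.sup_eq_union, hmem]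
  have hprod : (μ.prod lam) S = 0 := by
    rw [Measure.prod_apply_symm hS]
    have : ∀ g : G, μ ((fun x => (x, g)) ⁻¹' S) = 0 := fun g => by rw [hslice g]; exact hinv g
    simp [this]
  have hNull : ∀ᵐ x ∂μ, lam (Prod.mk x ⁻¹' S) = 0 := by
    have := (Measure.measure_prod_null (μ := μ) (ν := lam) hS).mp hprod
    filter_upwards [this] with x hx using hx
  have ex : ∀ C : Set X, μ C ≠ 0 → ∃ x, lam (Prod.mk x ⁻¹' S) = 0 ∧ x ∈ C := by
    intro C hC
    have hfreq : ∃ᵐ x ∂μ, x ∈ C := by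
      rw [MeasureTheory.frequently_ae_mem_iff]
      exact hC
    exact (hNull.and_frequently hfreq).exists
  obtain ⟨x₀, hx₀, hx₀A⟩ := ex A hApos
  obtain ⟨x₁, hx₁, hx₁A⟩ := ex Aᶜ hAcpos
  obtain ⟨h, hh⟩ := MulAction.exists_smul_eq G x₀ x₁
  set S₀ : Set G := {g | g⁻¹ • x₀ ∈ A} with hS₀def
  have hS₀c : lam S₀ᶜ = 0 := by
    refine measure_mono_null ?_ hx₀
    intro g hg
    exact Or.inl ⟨hx₀A, hg⟩
  have hS₀z : lam S₀ = 0 := by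
    have hsub : (fun g : G => h⁻¹ * g) ⁻¹' S₀ ⊆ Prod.mk x₁ ⁻¹' S := by
      intro g hg
      have hx : g⁻¹ • x₁ ∈ A := by
        rw [← hh]
        have : (h⁻¹ * g)⁻¹ • x₀ ∈ A := hg
        rwa [mul_inv_rev, inv_inv, mul_smul] at this
      exact Or.inr ⟨hx, hx₁A⟩
    have := measure_mono_null hsub hx₁
    rwa [measure_preimage_mul lam h⁻¹ S₀] at this
  have huniv : lam (Set.univ : Set G) = 0 := by
    have hle := measure_union_le (μ := lam) S₀ S₀ᶜ
    rw [Set.union_compl_self, hS₀z, hS₀c] at hle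
    simpa using hle
  exact (IsOpen.measure_ne_zero lam isOpen_univ Set.univ_nonempty) huniv

theorem stmt2 {G X : Type*} [Group G] [TopologicalSpace G] [IsTopologicalGroup G]
    [LocallyCompactSpace G] [SecondCountableTopology G]
    [TopologicalSpace X] [T2Space X] [LocallyCompactSpace X] [SecondCountableTopology X]
    [MeasurableSpace X] [BorelSpace X]
    [MulAction G X] [ContinuousSMul G X] [MulAction.IsPretransitive G X]
    (μ : Measure X) [SigmaFinite μ] [μ.Regular] [SMulInvariantMeasure G X μ]
    (B : Set X) (hB : MeasurableSet B) (hBinf : μ B = ⊤) (hBcinf : μ Bᶜ = ⊤)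
    (hsym : ∀ g : G, μ (symmDiff B (g • B)) < ⊤) :
    (∀ g : G, MemLp
        (fun x => B.indicator (fun _ => (1:ℂ)) x - (g • B).indicator (fun _ => (1:ℂ)) x) 2 μ)
    ∧ (∀ g h : G, ∀ x : X,
        B.indicator (fun _ => (1:ℂ)) x - ((g * h) • B).indicator (fun _ => (1:ℂ)) x
          = (B.indicator (fun _ => (1:ℂ)) x - (g • B).indicator (fun _ => (1:ℂ)) x)
            + (B.indicator (fun _ => (1:ℂ)) (g⁻¹ • x)
                - (h • B).indicator (fun _ => (1:ℂ)) (g⁻¹ • x)))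
    ∧ ¬ ∃ ξ : X → ℂ, MemLp ξ 2 μ ∧ ∀ g : G,
        (fun x => B.indicator (fun _ => (1:ℂ)) x - (g • B).indicator (fun _ => (1:ℂ)) x)
          =ᵐ[μ] fun x => ξ x - ξ (g⁻¹ • x) := by
  -- measurability of translates
  have hsmul_eq : ∀ (g : G) (C : Set X), g • C = (fun x : X => g⁻¹ • x) ⁻¹' C := by
    intro g C
    ext x
    simp [mem_smul_set_iff_inv_smul_mem]
  have hgB : ∀ g : G, MeasurableSet (g • B) := by
    intro g
    rw [hsmul_eq]
    exact (continuous_const_smul (g⁻¹ : G)).measurable hB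
  -- translation of indicators
  have key : ∀ (g : G) (C : Set X) (x : X),
      ((g • C).indicator (fun _ => (1:ℂ))) x = C.indicator (fun _ => (1:ℂ)) (g⁻¹ • x) := by
    intro g C x
    by_cases hx : x ∈ g • C
    · rw [Set.indicator_of_mem hx,
        Set.indicator_of_mem (mem_smul_set_iff_inv_smul_mem.mp hx)]
    · rw [Set.indicator_of_notMem hx,
        Set.indicator_of_notMem (fun hc => hx (mem_smul_set_iff_inv_smul_mem.mpr hc))]
  refine ⟨?_, ?_, ?_⟩
  · -- part 1: MemLp
    intro g
    have h1 : MemLp ((B \ g • B).indicator fun _ => (1:ℂ)) 2 μ := by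
      refine memLp_indicator_const 2 (hB.diff (hgB g)) 1 (Or.inr ?_)
      refine ne_of_lt (lt_of_le_of_lt (measure_mono ?_) (hsym g))
      rw [Set.symmDiff_def]
      exact Set.subset_union_left
    have h2 : MemLp ((g • B \ B).indicator fun _ => (1:ℂ)) 2 μ := by
      refine memLp_indicator_const 2 ((hgB g).diff hB) 1 (Or.inr ?_)
      refine ne_of_lt (lt_of_le_of_lt (measure_mono ?_) (hsym g))
      rw [Set.symmDiff_def]
      exact Set.subset_union_right
    have heq : (fun x => B.indicator (fun _ => (1:ℂ)) x - (g • B).indicator (fun _ => (1:ℂ)) x)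
        = fun x => (B \ g • B).indicator (fun _ => (1:ℂ)) x
            - (g • B \ B).indicator (fun _ => (1:ℂ)) x := by
      funext x
      by_cases hx : x ∈ B <;> by_cases hy : x ∈ g • B <;>
        simp [Set.indicator_apply, hx, hy]
    rw [heq]
    exact h1.sub h2
  · -- part 2: cocycle identity
    intro g h x
    have e1 : ((g • B).indicator (fun _ => (1:ℂ))) x = B.indicator (fun _ => (1:ℂ)) (g⁻¹ • x) :=
      key g B x
    have e2 : (((g * h) • B).indicator (fun _ => (1:ℂ))) x
        = (h • B).indicator (fun _ => (1:ℂ)) (g⁻¹ • x) := by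
      rw [key (g * h) B x, key h B (g⁻¹ • x)]
      rw [mul_inv_rev, mul_smul]
    rw [e2, ← e1]
    ring
  · -- part 3: not a coboundary
    rintro ⟨ξ, hξ2, hcob⟩
    obtain ⟨ξ', hξ'sm, hξeq⟩ := hξ2.aestronglyMeasurable
    have hξ'meas : Measurable ξ' := hξ'sm.measurable
    have hξ'2 : MemLp ξ' 2 μ := hξ2.ae_eq hξeq
    set η : X → ℂ := fun x => B.indicator (fun _ => (1:ℂ)) x - ξ' x with hηdef
    have hηmeas : Measurable η :=
      (measurable_const.indicator hB).sub hξ'meas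
    -- invariance of η
    have hinvη : ∀ g : G, ∀ᵐ x ∂μ, η x = η (g⁻¹ • x) := by
      intro g
      have h1 : ∀ᵐ x ∂μ, ξ x = ξ' x := hξeq
      have h2 : ∀ᵐ x ∂μ, ξ (g⁻¹ • x) = ξ' (g⁻¹ • x) := by
        have hmp : MeasurePreserving (fun x : X => g⁻¹ • x) μ μ := by
          refine ⟨(continuous_const_smul (g⁻¹ : G)).measurable, ?_⟩
          ext1 s hs
          rw [Measure.map_apply ((continuous_const_smul (g⁻¹ : G)).measurable) hs]
          exact SMulInvariantMeasure.measure_preimage_smul g⁻¹ hs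
        have := hmp.quasiMeasurePreserving.ae_eq_comp hξeq
        filter_upwards [this] with x hx using hx
      filter_upwards [hcob g, h1, h2] with x hc hx1 hx2
      rw [key g B x] at hc
      simp only [hηdef]
      rw [hx1, hx2] at hc
      linear_combination hc
    set A : Set X := {x | (1/2 : ℝ) < (η x).re} with hAdef
    have hAmeas : MeasurableSet A :=
      measurableSet_lt measurable_const (Complex.measurable_re.comp hηmeas)
    -- A is invariant mod null sets
    have hAinv : ∀ g : G, μ (symmDiff A (g • A)) = 0 := by
      intro g
      have hae : μ {x | ¬ η x = η (g⁻¹ • x)} = 0 := by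
        have := hinvη g
        rwa [MeasureTheory.ae_iff] at this
      refine measure_mono_null ?_ hae
      intro x hx
      have hmem : x ∈ g • A ↔ (1/2 : ℝ) < (η (g⁻¹ • x)).re := by
        rw [mem_smul_set_iff_inv_smul_mem]
        rfl
      rw [Set.symmDiff_def] at hx
      rcases hx with hx | hx
      · rcases hx with ⟨hxA, hxg⟩
        intro heq
        exact hxg (hmem.mpr (by rw [← heq]; exact hxA))
      · rcases hx with ⟨hxg, hxA⟩
        intro heq
        exact hxA (by simp only [hAdef, Set.mem_setOf_eq]; rw [heq]; exact hmem.mp hxg)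
    -- A differs from B by a finite-measure set
    have hsubset : symmDiff A B ⊆ {x | (1/2 : ℝ) ≤ ‖ξ' x‖} := by
      intro x hx
      rw [Set.symmDiff_def] at hx
      rcases hx with hx | hx
      · rcases hx with ⟨hxA, hxB⟩
        have hη : η x = - ξ' x := by
          simp only [hηdef, Set.indicator_of_notMem hxB]
          ring
        have : (1/2 : ℝ) < (- ξ' x).re := by rw [← hη]; exact hxA
        have h12 : (1/2 : ℝ) ≤ |(ξ' x).re| := by
          rw [Complex.neg_re] at this
          exact le_abs.mpr (Or.inr (by linarith))
        exact le_trans h12 (Complex.abs_re_le_norm _)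
      · rcases hx with ⟨hxB, hxA⟩
        have hη : η x = 1 - ξ' x := by
          simp only [hηdef, Set.indicator_of_mem hxB]
        have hle : (η x).re ≤ 1/2 := le_of_not_gt hxA
        have : (1/2 : ℝ) ≤ (ξ' x).re := by
          rw [hη] at hle
          simp only [Complex.sub_re, Complex.one_re] at hle
          linarith
        exact le_trans (le_trans this (le_abs_self _)) (Complex.abs_re_le_norm _)
    have hfin : μ {x | (1/2 : ℝ) ≤ ‖ξ' x‖} < ⊤ := by
      have := hξ'2.meas_ge_lt_top (ε := (1/2 : NNReal)) (by norm_num) (by norm_num) (by norm_num)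
      refine lt_of_le_of_lt (measure_mono ?_) this
      intro x hx
      simp only [Set.mem_setOf_eq, ← NNReal.coe_le_coe, coe_nnnorm]
      push_cast
      norm_num
      exact hx
    have hABfin : μ (symmDiff A B) < ⊤ := lt_of_le_of_lt (measure_mono hsubset) hfin
    -- μ A ≠ 0 and μ Aᶜ ≠ 0
    have hApos : μ A ≠ 0 := by
      intro h0
      have hBle : μ B ≤ μ A + μ (B \ A) := by
        refine le_trans (measure_mono ?_) (measure_union_le _ _)
        intro x hx
        by_cases hxA : x ∈ A
        · exact Or.inl hxA
        · exact Or.inr ⟨hx, hxA⟩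
      have hBA : μ (B \ A) < ⊤ := by
        refine lt_of_le_of_lt (measure_mono ?_) hABfin
        rw [Set.symmDiff_def]
        exact fun x hx => Or.inr hx
      rw [h0, zero_add] at hBle
      rw [hBinf] at hBle
      exact (ne_of_lt hBA) (top_le_iff.mp hBle)
    have hAcpos : μ Aᶜ ≠ 0 := by
      intro h0
      have hBle : μ Bᶜ ≤ μ Aᶜ + μ (A \ B) := by
        refine le_trans (measure_mono ?_) (measure_union_le _ _)
        intro x hx
        by_cases hxA : x ∈ A
        · exact Or.inr ⟨hxA, hx⟩
        · exact Or.inl hxA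
      have hAB : μ (A \ B) < ⊤ := by
        refine lt_of_le_of_lt (measure_mono ?_) hABfin
        rw [Set.symmDiff_def]
        exact fun x hx => Or.inl hx
      rw [h0, zero_add] at hBle
      rw [hBcinf] at hBle
      exact (ne_of_lt hAB) (top_le_iff.mp hBle)
    exact no_invariant_set_aux (G := G) μ A hAmeas hApos hAcpos hAinv
end

section
/- Let G be a topological group and π a strongly continuous unitary representation of G on a complex Hilbert space H. Assume G is generated (as a group) by a sequence of subgroups (G_n)_{n∈ℕ} such that for every n ∈ ℕ: (a) every element of G_n commutes with every element of G_{n+1}; (b) the restriction π|_{G_n} has no nonzero invariant vectors; and (c) there exists an index i and a compact subset Q ⊆ G_i and a constant C > 0 such that ‖ξ‖ ≤ C · sup_{g∈Q} ‖π(g)ξ − ξ‖ for every ξ ∈ H. Then every continuous 1-cocycle c : G → H for π is a 1-coboundary, i.e., H¹(G, π) = 0. -/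
open MeasureTheory Set

section Aux
variable {G H : Type*} [Group G] [NormedAddCommGroup H] [InnerProductSpace ℂ H] [CompleteSpace H]

lemma zero_mem_closure_hull (π : G →* (H ≃ₗᵢ[ℂ] H)) (Γ : Subgroup G)
    (hno : ∀ ξ : H, (∀ g ∈ Γ, π g ξ = ξ) → ξ = 0) (v : H) :
    (0:H) ∈ closure (convexHull ℝ ((fun h : G => π h v) '' (Γ : Set G))) := by
  set O : Set H := (fun h : G => π h v) '' (Γ : Set G) with hO
  set K : Set H := closure (convexHull ℝ O) with hK
  have hne : K.Nonempty := ⟨π 1 v, subset_closure (subset_convexHull ℝ O ⟨1, Γ.one_mem, rfl⟩)⟩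
  have hconv : Convex ℝ K := (convex_convexHull ℝ O).closure
  have hcomplete : IsComplete K := isClosed_closure.isComplete
  -- invariance of K
  have hinv : ∀ g ∈ Γ, ∀ x ∈ K, π g x ∈ K := by
    intro g hg x hx
    have hlin : IsLinearMap ℝ (fun y : H => π g y) := by
      constructor
      · exact fun a b => map_add _ a b
      · intro a y; rw [← algebraMap_smul ℂ a y, _root_.map_smul, algebraMap_smul]
    have hOg : (fun y : H => π g y) '' O ⊆ O := by
      rintro _ ⟨_, ⟨h, hh, rfl⟩, rfl⟩
      exact ⟨g * h, Γ.mul_mem hg hh, by simp [map_mul]⟩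
    have h1 : (fun y : H => π g y) '' K ⊆ closure ((fun y : H => π g y) '' (convexHull ℝ O)) :=
      image_closure_subset_closure_image (π g).continuous
    have h2 : (fun y : H => π g y) '' (convexHull ℝ O) ⊆ convexHull ℝ O := by
      rw [hlin.image_convexHull]
      exact convexHull_mono hOg
    exact closure_mono h2 (h1 ⟨x, hx, rfl⟩)
  -- minimizer of norm on K
  letI : InnerProductSpace ℝ H := InnerProductSpace.complexToReal
  obtain ⟨m, hmK, hm⟩ := exists_norm_eq_iInf_of_complete_convex hne hcomplete hconv 0
  set d : ℝ := ⨅ w : K, ‖(0:H) - ↑w‖ with hd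
  have hdle : ∀ x ∈ K, d ≤ ‖x‖ := by
    intro x hx
    have h := ciInf_le (f := fun w : K => ‖(0:H) - ↑w‖)
      ⟨0, Set.forall_mem_range.2 fun _ => norm_nonneg _⟩ ⟨x, hx⟩
    rw [zero_sub, norm_neg] at h
    exact h
  have hmnorm : ‖m‖ = d := by simpa using hm
  -- m is invariant
  have hminv : ∀ g ∈ Γ, π g m = m := by
    intro g hg
    set m' : H := π g m with hm'
    have hm'K : m' ∈ K := hinv g hg m hmK
    have hm'norm : ‖m'‖ = d := by rw [hm']; rw [(π g).norm_map]; exact hmnorm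
    have hmid : (1/2 : ℝ) • m + (1/2 : ℝ) • m' ∈ K :=
      hconv hmK hm'K (by norm_num) (by norm_num) (by norm_num)
    have hmidnorm : d ≤ ‖(1/2 : ℝ) • m + (1/2 : ℝ) • m'‖ := hdle _ hmid
    have hpar := parallelogram_law_with_norm ℂ m m'
    have hsum : ‖m + m'‖ = 2 * ‖(1/2 : ℝ) • m + (1/2 : ℝ) • m'‖ := by
      rw [← smul_add, norm_smul]
      simp
    have hd0 : (0:ℝ) ≤ d := hmnorm ▸ norm_nonneg m
    have h2 : (2*d)*(2*d) ≤ ‖m + m'‖ * ‖m + m'‖ := by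
      rw [hsum]
      have := mul_le_mul hmidnorm hmidnorm hd0 (norm_nonneg _)
      nlinarith
    have h0 : ‖m - m'‖ * ‖m - m'‖ ≤ 0 := by nlinarith [hpar, h2, hmnorm, hm'norm]
    have : m - m' = 0 := by
      have hnn := norm_nonneg (m - m')
      have h1 : ‖m - m'‖ = 0 := by nlinarith
      exact norm_eq_zero.mp h1
    rw [hm'] at this
    linear_combination (norm := module) -this
  have : m = 0 := hno m hminv
  rw [← this]; exact hmK


noncomputable def toCLM (π : G →* (H ≃ₗᵢ[ℂ] H)) (g : G) : H →L[ℂ] H :=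
  (π g).toLinearIsometry.toContinuousLinearMap

def gens (π : G →* (H ≃ₗᵢ[ℂ] H)) (c : G → H) (Γ : Subgroup G) : Set ((H →L[ℂ] H) × H) :=
  {p | ∃ h ∈ Γ, p = (toCLM π h, c h)}

lemma hull_norm_le (π : G →* (H ≃ₗᵢ[ℂ] H)) (c : G → H) (Γ : Subgroup G) :
    ∀ p ∈ convexHull ℝ (gens π c Γ), ∀ w : H, ‖p.1 w‖ ≤ ‖w‖ := by
  intro p hp w
  have : convexHull ℝ (gens π c Γ) ⊆ {p : (H →L[ℂ] H) × H | ‖p.1 w‖ ≤ ‖w‖} := by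
    apply convexHull_min
    · rintro _ ⟨h, hh, rfl⟩
      simp only [Set.mem_setOf_eq]
      have : toCLM π h w = π h w := rfl
      rw [this, (π h).norm_map]
    · intro x hx y hy a b ha hb hab
      simp only [Set.mem_setOf_eq] at *
      have : (a • x + b • y).1 w = a • x.1 w + b • y.1 w := by
        simp [Prod.smul_fst, ContinuousLinearMap.smul_apply]
      rw [this]
      calc ‖a • x.1 w + b • y.1 w‖ ≤ a * ‖x.1 w‖ + b * ‖y.1 w‖ := by
            refine (norm_add_le _ _).trans ?_
            rw [norm_smul, norm_smul, Real.norm_of_nonneg ha, Real.norm_of_nonneg hb]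
        _ ≤ a * ‖w‖ + b * ‖w‖ := by
            gcongr
        _ = ‖w‖ := by rw [← add_mul, hab, one_mul]
  exact this hp

lemma piR (π : G →* (H ≃ₗᵢ[ℂ] H)) (g : G) (a : ℝ) (x : H) : π g (a • x) = a • π g x := by
  rw [← algebraMap_smul ℂ a x, _root_.map_smul, algebraMap_smul]

lemma combo_aux {a b : ℝ} (hab : a + b = 1) (u X Y : H) :
    a • (u + X) + b • (u + Y) = u + (a • X + b • Y) := by
  have h : a • (u + X) + b • (u + Y) = (a + b) • u + (a • X + b • Y) := by
    rw [smul_add, smul_add, add_smul]; abel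
  rw [h, hab, one_smul]

lemma mul_mem_hull (π : G →* (H ≃ₗᵢ[ℂ] H)) (c : G → H) (Γ : Subgroup G)
    (hc : ∀ g h : G, c (g * h) = c g + π g (c h))
    {p q : (H →L[ℂ] H) × H} (hp : p ∈ convexHull ℝ (gens π c Γ))
    (hq : q ∈ convexHull ℝ (gens π c Γ)) :
    (p.1.comp q.1, p.2 + p.1 q.2) ∈ convexHull ℝ (gens π c Γ) := by
  have step1 : ∀ h ∈ Γ, ∀ q ∈ convexHull ℝ (gens π c Γ),
      ((toCLM π h).comp q.1, c h + (toCLM π h) q.2) ∈ convexHull ℝ (gens π c Γ) := by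
    intro h hh
    have hsub : convexHull ℝ (gens π c Γ) ⊆
        {q : (H →L[ℂ] H) × H |
          ((toCLM π h).comp q.1, c h + (toCLM π h) q.2) ∈ convexHull ℝ (gens π c Γ)} := by
      apply convexHull_min
      · rintro _ ⟨h', hh', rfl⟩
        apply subset_convexHull
        refine ⟨h * h', Γ.mul_mem hh hh', ?_⟩
        refine Prod.ext ?_ ?_
        · ext w
          show π h (π h' w) = (π (h * h')) w
          rw [map_mul]; rfl
        · show c h + π h (c h') = c (h * h')
          exact (hc h h').symm
      · intro x hx y hy a b ha hb hab
        simp only [Set.mem_setOf_eq] at hx hy ⊢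
        have heq : ((toCLM π h).comp (a • x + b • y).1, c h + (toCLM π h) (a • x + b • y).2)
            = a • ((toCLM π h).comp x.1, c h + (toCLM π h) x.2)
              + b • ((toCLM π h).comp y.1, c h + (toCLM π h) y.2) := by
          refine Prod.ext ?_ ?_
          · ext w
            show π h ((a • x.1 + b • y.1) w) = (a • (toCLM π h).comp x.1
                + b • (toCLM π h).comp y.1) w
            rw [ContinuousLinearMap.add_apply, ContinuousLinearMap.smul_apply,
              ContinuousLinearMap.smul_apply, ContinuousLinearMap.add_apply,
              ContinuousLinearMap.smul_apply, ContinuousLinearMap.smul_apply]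
            rw [map_add, piR, piR]
            rfl
          · show c h + π h ((a • x + b • y).2) = (a • (c h + (toCLM π h) x.2)
                + b • (c h + (toCLM π h) y.2))
            have h2 : (a • x + b • y).2 = a • x.2 + b • y.2 := rfl
            rw [h2, map_add, piR, piR, combo_aux hab]
            rfl
        rw [heq]
        exact (convex_convexHull ℝ _) hx hy ha hb hab
    exact fun q hq => hsub hq
  have step2 : convexHull ℝ (gens π c Γ) ⊆
      {p : (H →L[ℂ] H) × H | (p.1.comp q.1, p.2 + p.1 q.2) ∈ convexHull ℝ (gens π c Γ)} := by
    apply convexHull_min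
    · rintro _ ⟨h, hh, rfl⟩
      exact step1 h hh q hq
    · intro x hx y hy a b ha hb hab
      simp only [Set.mem_setOf_eq] at hx hy ⊢
      have heq : ((a • x + b • y).1.comp q.1, (a • x + b • y).2 + (a • x + b • y).1 q.2)
          = a • (x.1.comp q.1, x.2 + x.1 q.2) + b • (y.1.comp q.1, y.2 + y.1 q.2) := by
        refine Prod.ext ?_ ?_
        · ext w
          show (a • x.1 + b • y.1) (q.1 w) = (a • x.1.comp q.1 + b • y.1.comp q.1) w
          rw [ContinuousLinearMap.add_apply, ContinuousLinearMap.smul_apply,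
            ContinuousLinearMap.smul_apply, ContinuousLinearMap.add_apply,
            ContinuousLinearMap.smul_apply, ContinuousLinearMap.smul_apply]
          rfl
        · show (a • x.2 + b • y.2) + (a • x.1 + b • y.1) q.2
              = a • (x.2 + x.1 q.2) + b • (y.2 + y.1 q.2)
          rw [ContinuousLinearMap.add_apply, ContinuousLinearMap.smul_apply,
            ContinuousLinearMap.smul_apply, smul_add, smul_add]
          abel
      rw [heq]
      exact (convex_convexHull ℝ _) hx hy ha hb hab
  exact step2 hp


lemma kill_vector (π : G →* (H ≃ₗᵢ[ℂ] H)) (c : G → H) (Γ : Subgroup G)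
    (hno : ∀ ξ : H, (∀ g ∈ Γ, π g ξ = ξ) → ξ = 0) (v : H) {ε : ℝ} (hε : 0 < ε) :
    ∃ p ∈ convexHull ℝ (gens π c Γ), ‖p.1 v‖ < ε := by
  -- evaluation map
  let Φ : ((H →L[ℂ] H) × H) →ₗ[ℝ] H :=
    { toFun := fun p => p.1 v
      map_add' := by intro x y; simp [ContinuousLinearMap.add_apply]
      map_smul' := by intro a x; simp [ContinuousLinearMap.smul_apply] }
  have himg : Φ '' (gens π c Γ) = (fun h : G => π h v) '' (Γ : Set G) := by
    ext x
    constructor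
    · rintro ⟨_, ⟨h, hh, rfl⟩, rfl⟩
      exact ⟨h, hh, rfl⟩
    · rintro ⟨h, hh, rfl⟩
      exact ⟨(toCLM π h, c h), ⟨h, hh, rfl⟩, rfl⟩
  have h0 := zero_mem_closure_hull π Γ hno v
  rw [← himg, ← Φ.image_convexHull] at h0
  rw [Metric.mem_closure_iff] at h0
  obtain ⟨x, hx, hdist⟩ := h0 ε hε
  obtain ⟨p, hp, rfl⟩ := hx
  refine ⟨p, hp, ?_⟩
  have : dist (0:H) (Φ p) = ‖Φ p‖ := by simp
  rw [this] at hdist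
  exact hdist

lemma kill_list (π : G →* (H ≃ₗᵢ[ℂ] H)) (c : G → H) (Γ : Subgroup G)
    (hc : ∀ g h : G, c (g * h) = c g + π g (c h))
    (hno : ∀ ξ : H, (∀ g ∈ Γ, π g ξ = ξ) → ξ = 0) (l : List H) {ε : ℝ} (hε : 0 < ε) :
    ∃ p ∈ convexHull ℝ (gens π c Γ), ∀ v ∈ l, ‖p.1 v‖ < ε := by
  induction l with
  | nil =>
      exact ⟨(toCLM π 1, c 1), subset_convexHull ℝ _ ⟨1, Γ.one_mem, rfl⟩, by simp⟩
  | cons v l ih =>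
      obtain ⟨p, hp, hl⟩ := ih
      obtain ⟨q, hq, hv⟩ := kill_vector π c Γ hno (p.1 v) hε
      refine ⟨(q.1.comp p.1, q.2 + q.1 p.2), mul_mem_hull π c Γ hc hq hp, ?_⟩
      intro w hw
      rcases List.mem_cons.mp hw with rfl | hw'
      · exact hv
      · calc ‖(q.1.comp p.1, q.2 + q.1 p.2).1 w‖ = ‖q.1 (p.1 w)‖ := rfl
          _ ≤ ‖p.1 w‖ := hull_norm_le π c Γ q hq (p.1 w)
          _ < ε := hl w hw'

lemma kill_compact (π : G →* (H ≃ₗᵢ[ℂ] H)) (c : G → H) (Γ : Subgroup G)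
    (hc : ∀ g h : G, c (g * h) = c g + π g (c h))
    (hno : ∀ ξ : H, (∀ g ∈ Γ, π g ξ = ξ) → ξ = 0) {K : Set H} (hK : IsCompact K)
    {ε : ℝ} (hε : 0 < ε) :
    ∃ p ∈ convexHull ℝ (gens π c Γ), ∀ v ∈ K, ‖p.1 v‖ < ε := by
  obtain ⟨t, hts, htfin, htsub⟩ := hK.finite_cover_balls (half_pos hε)
  obtain ⟨p, hp, hball⟩ := kill_list π c Γ hc hno htfin.toFinset.toList (half_pos hε)
  refine ⟨p, hp, ?_⟩
  intro v hv
  obtain ⟨y, hy, hvy⟩ := Set.mem_iUnion₂.mp (htsub hv)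
  have hyl : y ∈ htfin.toFinset.toList := by
    rw [Finset.mem_toList, Set.Finite.mem_toFinset]; exact hy
  have h1 : ‖p.1 y‖ < ε / 2 := hball y hyl
  have h2 : ‖p.1 v - p.1 y‖ ≤ ‖v - y‖ := by
    rw [← map_sub]
    exact hull_norm_le π c Γ p hp (v - y)
  have h3 : ‖v - y‖ < ε / 2 := by
    rw [Metric.mem_ball, dist_eq_norm] at hvy
    exact hvy
  calc ‖p.1 v‖ = ‖p.1 y + (p.1 v - p.1 y)‖ := by congr 1; abel
    _ ≤ ‖p.1 y‖ + ‖p.1 v - p.1 y‖ := norm_add_le _ _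
    _ < ε / 2 + ε / 2 := by gcongr; exact h2.trans_lt h3
    _ = ε := add_halves ε

end Aux

theorem stmt3 {G H : Type*} [Group G] [TopologicalSpace G] [IsTopologicalGroup G]
    [NormedAddCommGroup H] [InnerProductSpace ℂ H] [CompleteSpace H]
    (π : G →* (H ≃ₗᵢ[ℂ] H)) (hπcont : ∀ ξ : H, Continuous fun g => π g ξ)
    (G_ : ℕ → Subgroup G) (hgen : (⨆ n, G_ n) = ⊤)
    (hcomm : ∀ n : ℕ, ∀ g ∈ G_ n, ∀ h ∈ G_ (n + 1), Commute g h)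
    (hnoinv : ∀ n : ℕ, ∀ ξ : H, (∀ g ∈ G_ n, π g ξ = ξ) → ξ = 0)
    (hgap : ∃ i : ℕ, ∃ Q : Set G, Q ⊆ (G_ i : Set G) ∧ IsCompact Q ∧
      ∃ C : ℝ, 0 < C ∧ ∀ ξ : H, ‖ξ‖ ≤ C * ⨆ g : Q, ‖π (g : G) ξ - ξ‖) :
    ∀ c : G → H, Continuous c → (∀ g h : G, c (g * h) = c g + π g (c h)) →
      ∃ ξ : H, ∀ g : G, c g = ξ - π g ξ := by
  intro c hccont hc
  obtain ⟨i, Q, hQi, hQcomp, C, hCpos, hgapineq⟩ := hgap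
  set Γ : Subgroup G := G_ (i+1) with hΓ
  have hno : ∀ ξ : H, (∀ g ∈ Γ, π g ξ = ξ) → ξ = 0 := hnoinv (i+1)
  -- every element of the hull satisfies the key affine identity
  have hull_id : ∀ p ∈ convexHull ℝ (gens π c Γ), ∀ q ∈ G_ i,
      p.2 - π q p.2 = c q - p.1 (c q) := by
    intro p hp q hq
    have hsub : convexHull ℝ (gens π c Γ) ⊆
        {p : (H →L[ℂ] H) × H | p.2 - π q p.2 = c q - p.1 (c q)} := by
      apply convexHull_min
      · rintro _ ⟨h, hh, rfl⟩
        simp only [Set.mem_setOf_eq]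
        show c h - π q (c h) = c q - π h (c q)
        have hcq : q * h = h * q := hcomm i q hq h hh
        have h1 : c (q * h) = c q + π q (c h) := hc q h
        rw [hcq, hc h q] at h1
        rw [sub_eq_sub_iff_add_eq_add]
        exact h1
      · intro x hx y hy a b ha hb hab
        simp only [Set.mem_setOf_eq] at hx hy ⊢
        have h2 : (a • x + b • y).2 = a • x.2 + b • y.2 := rfl
        have h1 : (a • x + b • y).1 (c q) = a • x.1 (c q) + b • y.1 (c q) := by
          show (a • x.1 + b • y.1) (c q) = _
          rw [ContinuousLinearMap.add_apply, ContinuousLinearMap.smul_apply,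
            ContinuousLinearMap.smul_apply]
        rw [h2, h1, map_add, piR, piR]
        have e1 : a • x.2 + b • y.2 - (a • (π q) x.2 + b • (π q) y.2)
            = a • (x.2 - π q x.2) + b • (y.2 - π q y.2) := by
          rw [smul_sub, smul_sub]; abel
        rw [e1, hx, hy]
        have e2 : a • (c q - x.1 (c q)) + b • (c q - y.1 (c q))
            = (a + b) • c q - (a • x.1 (c q) + b • y.1 (c q)) := by
          rw [smul_sub, smul_sub, add_smul]; abel
        rw [e2, hab, one_smul]
    exact hsub hp
  -- gap utility
  have gapb : ∀ (v : H) (ε : ℝ), 0 ≤ ε → (∀ q ∈ Q, ‖π q v - v‖ ≤ ε) → ‖v‖ ≤ C * ε := by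
    intro v ε hε hb
    refine (hgapineq v).trans ?_
    refine mul_le_mul_of_nonneg_left ?_ hCpos.le
    exact Real.iSup_le (fun q => hb q q.2) hε
  -- the approximating sequence
  have hKcomp : IsCompact (c '' Q) := hQcomp.image hccont
  have hseq : ∀ n : ℕ, ∃ ξn : H, ∀ q ∈ Q, ‖c q - (ξn - π q ξn)‖ ≤ 1/(n+1) := by
    intro n
    have hpos : (0:ℝ) < 1/(n+1) := by positivity
    obtain ⟨p, hp, hkill⟩ := kill_compact π c Γ hc hno hKcomp hpos
    refine ⟨p.2, fun q hq => ?_⟩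
    have hid := hull_id p hp q (hQi hq)
    have e : c q - (p.2 - π q p.2) = p.1 (c q) := by rw [hid]; abel
    rw [e]
    exact (hkill (c q) ⟨q, hq, rfl⟩).le
  choose ξs hξs using hseq
  -- Cauchy
  have hdist : ∀ n m : ℕ, ‖ξs n - ξs m‖ ≤ C * (1/(n+1) + 1/(m+1)) := by
    intro n m
    refine gapb _ _ (by positivity) ?_
    intro q hq
    have e : π q (ξs n - ξs m) - (ξs n - ξs m)
        = (c q - (ξs n - π q (ξs n))) - (c q - (ξs m - π q (ξs m))) := by
      rw [map_sub]; abel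
    rw [e]
    calc ‖(c q - (ξs n - π q (ξs n))) - (c q - (ξs m - π q (ξs m)))‖
        ≤ ‖c q - (ξs n - π q (ξs n))‖ + ‖c q - (ξs m - π q (ξs m))‖ := norm_sub_le _ _
      _ ≤ 1/(n+1) + 1/(m+1) := add_le_add (hξs n q hq) (hξs m q hq)
  have hcauchy : CauchySeq ξs := by
    refine cauchySeq_of_le_tendsto_0 (fun N => C * (2/(N+1))) ?_ ?_
    · intro n m N hn hm
      rw [dist_eq_norm]
      refine (hdist n m).trans ?_
      have h1 : (1:ℝ)/(n+1) ≤ 1/(N+1) := by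
        apply one_div_le_one_div_of_le (by positivity)
        exact_mod_cast Nat.succ_le_succ hn
      have h2 : (1:ℝ)/(m+1) ≤ 1/(N+1) := by
        apply one_div_le_one_div_of_le (by positivity)
        exact_mod_cast Nat.succ_le_succ hm
      have : (1:ℝ)/(n+1) + 1/(m+1) ≤ 2/(N+1) := by
        rw [show (2:ℝ)/(N+1) = 1/(N+1) + 1/(N+1) by ring]
        exact add_le_add h1 h2
      exact mul_le_mul_of_nonneg_left this hCpos.le
    · have h := tendsto_one_div_add_atTop_nhds_zero_nat.const_mul (2*C)
      rw [mul_zero] at h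
      refine h.congr (fun n => ?_)
      ring
  obtain ⟨ξ, hξlim⟩ := cauchySeq_tendsto_of_complete hcauchy
  have hQfix : ∀ q ∈ Q, c q = ξ - π q ξ := by
    intro q hq
    have hterm : Filter.Tendsto (fun n => ξs n - π q (ξs n)) Filter.atTop (nhds (ξ - π q ξ)) := by
      refine hξlim.sub ?_
      exact ((π q).continuous.tendsto ξ).comp hξlim
    have hterm2 : Filter.Tendsto (fun n => ξs n - π q (ξs n)) Filter.atTop (nhds (c q)) := by
      rw [tendsto_iff_dist_tendsto_zero]
      refine squeeze_zero (fun n => dist_nonneg) (fun n => ?_)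
        tendsto_one_div_add_atTop_nhds_zero_nat
      rw [dist_eq_norm, ← norm_neg]
      have e : -(ξs n - π q (ξs n) - c q) = c q - (ξs n - π q (ξs n)) := by abel
      rw [e]
      exact hξs n q hq
    exact tendsto_nhds_unique hterm2 hterm
  -- the modified cocycle
  set c' : G → H := fun g => c g - (ξ - π g ξ) with hc'def
  have hmul : ∀ (g h : G) (v : H), π (g*h) v = π g (π h v) := by
    intro g h v; rw [map_mul]; rfl
  have hc' : ∀ g h : G, c' (g*h) = c' g + π g (c' h) := by
    intro g h
    simp only [hc'def]
    rw [hc g h, hmul, map_sub, map_sub]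
    abel
  have hrel : ∀ g h : G, Commute g h → c' g + π g (c' h) = c' h + π h (c' g) := by
    intro g h hgh
    rw [← hc' g h, ← hc' h g, hgh.eq]
  have hQ0 : ∀ q ∈ Q, c' q = 0 := by
    intro q hq
    simp only [hc'def]
    rw [sub_eq_zero]
    exact hQfix q hq
  have gap0 : ∀ v : H, (∀ q ∈ Q, π q v = v) → v = 0 := by
    intro v hv
    have := gapb v 0 le_rfl (fun q hq => by rw [hv q hq, sub_self, norm_zero])
    rw [mul_zero] at this
    exact norm_le_zero_iff.mp this
  -- vanishing on all the subgroups
  have hPi1 : ∀ h ∈ G_ (i+1), c' h = 0 := by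
    intro h hh
    apply gap0
    intro q hq
    have e := hrel q h (hcomm i q (hQi hq) h hh)
    rw [hQ0 q hq, map_zero, zero_add, add_zero] at e
    exact e
  have step_up : ∀ n : ℕ, (∀ g ∈ G_ n, c' g = 0) → ∀ h ∈ G_ (n+1), c' h = 0 := by
    intro n hP h hh
    apply hnoinv n
    intro g hg
    have e := hrel g h (hcomm n g hg h hh)
    rw [hP g hg, map_zero, zero_add, add_zero] at e
    exact e
  have step_down : ∀ n : ℕ, (∀ h ∈ G_ (n+1), c' h = 0) → ∀ g ∈ G_ n, c' g = 0 := by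
    intro n hP g hg
    apply hnoinv (n+1)
    intro h hh
    have e := hrel g h (hcomm n g hg h hh)
    rw [hP h hh, map_zero, add_zero, zero_add] at e
    exact e.symm
  have hPall : ∀ n : ℕ, ∀ g ∈ G_ n, c' g = 0 := by
    have hup : ∀ k : ℕ, ∀ g ∈ G_ (i+1+k), c' g = 0 := by
      intro k
      induction k with
      | zero => exact hPi1
      | succ k ih =>
          have e : i+1+(k+1) = (i+1+k)+1 := by omega
          rw [e]
          exact step_up _ ih
    have hdown : ∀ k : ℕ, ∀ g ∈ G_ (i+1-k), c' g = 0 := by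
      intro k
      induction k with
      | zero => exact hPi1
      | succ k ih =>
          by_cases hk : i+1-k = 0
          · have e : i+1-(k+1) = 0 := by omega
            rw [e, ← hk]
            exact ih
          · apply step_down
            have e : (i+1-(k+1))+1 = i+1-k := by omega
            rw [e]
            exact ih
    intro n
    rcases le_or_gt n (i+1) with hle | hlt
    · have e : n = i+1 - (i+1-n) := by omega
      rw [e]
      exact hdown _
    · have e : n = i+1 + (n-(i+1)) := by omega
      rw [e]
      exact hup _
  -- the vanishing set is a subgroup containing all G_ n, hence everything
  have hone : c' 1 = 0 := by
    have e := hc' 1 1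
    rw [one_mul, map_one] at e
    have e2 : (1 : H ≃ₗᵢ[ℂ] H) (c' 1) = c' 1 := rfl
    rw [e2] at e
    exact add_eq_left.mp e.symm
  let V : Subgroup G :=
    { carrier := {g : G | c' g = 0}
      one_mem' := hone
      mul_mem' := by
        intro a b ha hb
        simp only [Set.mem_setOf_eq] at ha hb ⊢
        rw [hc' a b, ha, hb, map_zero, add_zero]
      inv_mem' := by
        intro g hg
        simp only [Set.mem_setOf_eq] at hg ⊢
        have e := hc' g⁻¹ g
        rw [inv_mul_cancel, hone, hg, map_zero, add_zero] at e
        exact e.symm }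
  have hVtop : (⊤ : Subgroup G) ≤ V := by
    rw [← hgen]
    exact iSup_le (fun n => fun g hg => hPall n g hg)
  refine ⟨ξ, fun g => ?_⟩
  have hgV : c' g = 0 := hVtop (Subgroup.mem_top g)
  simp only [hc'def] at hgV
  rw [sub_eq_zero] at hgV
  exact hgV
end

section
/- Let G be a topological group, π a strongly continuous unitary representation of G on a complex Hilbert space H, and c : G → H a continuous 1-cocycle for π. Suppose Q ⊆ G is a compact subset and C > 0 is a constant such that ‖ξ‖ ≤ C · sup_{g∈Q} ‖π(g)ξ − ξ‖ for every ξ ∈ H. Then for every h ∈ G that commutes with every element of Q, one has ‖c(h)‖ ≤ 2C · sup_{g∈Q} ‖c(g)‖; in particular c is bounded on the centralizer of Q in G. -/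
open MeasureTheory Set

theorem stmt4 {G H : Type*} [Group G] [TopologicalSpace G] [IsTopologicalGroup G]
    [NormedAddCommGroup H] [InnerProductSpace ℂ H] [CompleteSpace H]
    (π : G →* (H ≃ₗᵢ[ℂ] H)) (hπcont : ∀ ξ : H, Continuous fun g => π g ξ)
    (c : G → H) (hccont : Continuous c)
    (hcocycle : ∀ g h : G, c (g * h) = c g + π g (c h))
    (Q : Set G) (hQ : IsCompact Q) (C : ℝ) (hC : 0 < C)
    (hgap : ∀ ξ : H, ‖ξ‖ ≤ C * ⨆ g : Q, ‖π (g : G) ξ - ξ‖) :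
    ∀ h : G, (∀ g ∈ Q, Commute g h) → ‖c h‖ ≤ 2 * C * ⨆ g : Q, ‖c (g : G)‖ := by
  intro h hcomm
  set S : ℝ := ⨆ g : Q, ‖c (g : G)‖ with hS
  have hbdd : BddAbove (Set.range fun g : Q => ‖c (g : G)‖) := by
    have : (Set.range fun g : Q => ‖c (g : G)‖) = (fun g => ‖c g‖) '' Q := by
      ext x; simp [Set.mem_image]
    rw [this]
    exact (hQ.image (hccont.norm)).bddAbove
  have hSnn : 0 ≤ S := Real.iSup_nonneg fun g => norm_nonneg _
  have key : ∀ g : Q, ‖π (g : G) (c h) - c h‖ ≤ 2 * S := by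
    intro g
    have hc1 := hcocycle (g : G) h
    have hc2 := hcocycle h (g : G)
    have hgh : (g : G) * h = h * (g : G) := hcomm g g.2
    have heq : π (g : G) (c h) - c h = π h (c (g : G)) - c (g : G) := by
      have heqn : c (g : G) + π (g : G) (c h) = c h + π h (c (g : G)) :=
        hc1.symm.trans (by rw [hgh]; exact hc2)
      rw [sub_eq_sub_iff_add_eq_add, add_comm, heqn, add_comm]
    rw [heq]
    have hle : ‖c (g : G)‖ ≤ S := le_ciSup hbdd g
    calc ‖π h (c (g : G)) - c (g : G)‖ ≤ ‖π h (c (g : G))‖ + ‖c (g : G)‖ := norm_sub_le _ _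
      _ = ‖c (g : G)‖ + ‖c (g : G)‖ := by rw [(π h).norm_map]
      _ ≤ S + S := add_le_add hle hle
      _ = 2 * S := by ring
  calc ‖c h‖ ≤ C * ⨆ g : Q, ‖π (g : G) (c h) - c h‖ := hgap _
    _ ≤ C * (2 * S) := by
        refine mul_le_mul_of_nonneg_left ?_ hC.le
        exact Real.iSup_le key (by positivity)
    _ = 2 * C * S := by ring
end

section
/- Let G be a topological group, π a unitary representation of G on a complex Hilbert space H, and c : G → H a 1-cocycle for π. Suppose H₀ and K are subgroups of G such that every element of H₀ commutes with every element of K, c vanishes identically on H₀, and π restricted to H₀ has no nonzero invariant vectors. Then c vanishes identically on K. -/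
open MeasureTheory Set
theorem stmt5 {G H : Type*} [Group G]
    [NormedAddCommGroup H] [InnerProductSpace ℂ H] [CompleteSpace H]
    (π : G →* (H ≃ₗᵢ[ℂ] H))
    (c : G → H) (hcocycle : ∀ g h : G, c (g * h) = c g + π g (c h))
    (H₀ K : Subgroup G)
    (hcomm : ∀ h ∈ H₀, ∀ k ∈ K, Commute h k)
    (hvanish : ∀ h ∈ H₀, c h = 0)
    (hnoinv : ∀ ξ : H, (∀ h ∈ H₀, π h ξ = ξ) → ξ = 0) :
    ∀ k ∈ K, c k = 0 := by
  intro k hk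
  apply hnoinv
  intro h hh
  have h1 : c (h * k) = π h (c k) := by
    rw [hcocycle, hvanish h hh, zero_add]
  have h2 : c (k * h) = c k := by
    rw [hcocycle, hvanish h hh, map_zero, add_zero]
  rw [← h1, hcomm h hh k hk, h2]
end

section
/- Let G be a unimodular locally compact second countable group and Γ ≤ G a discrete subgroup, with μ the G-invariant quotient measure on G/Γ. Assume G is generated (as a group) by a sequence of subgroups (G_n)_{n∈ℕ} such that for every n ∈ ℕ: (a) every element of G_n commutes with every element of G_{n+1}; (b) L²(G/Γ, μ) has no nonzero vector fixed by the Koopman action of every element of G_n; and (c) there exists an index i, a compact subset Q ⊆ G_i, and a constant C > 0 such that ‖f‖₂ ≤ C · sup_{g∈Q} ‖g·f − f‖₂ for every f ∈ L²(G/Γ, μ). Then every continuous 1-cocycle c : G → L²(G/Γ, μ) for the Koopman representation is a 1-coboundary, i.e., H¹(G, κ) = 0. -/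
open MeasureTheory Set Pointwise

set_option maxHeartbeats 1000000 in

theorem cheb_fixed {E : Type*} [NormedAddCommGroup E] [InnerProductSpace ℂ E]
    [CompleteSpace E] (S : Set E) (hne : S.Nonempty) (hbd : Bornology.IsBounded S) :
    ∃ z : E, ∀ T : E → E, (∀ x y : E, ‖T x - T y‖ = ‖x - y‖) → T '' S = S → T z = z := by
  obtain ⟨M, hM⟩ := isBounded_iff_forall_norm_le.mp hbd
  obtain ⟨s₀, hs₀⟩ := hne
  haveI hSne : Nonempty ↑S := ⟨⟨s₀, hs₀⟩⟩
  set r : E → ℝ := fun x => ⨆ s : S, ‖x - s.1‖ with hr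
  have hbdd : ∀ x : E, BddAbove (Set.range fun s : S => ‖x - s.1‖) := by
    intro x
    refine ⟨‖x‖ + M, ?_⟩
    rintro _ ⟨s, rfl⟩
    exact (norm_sub_le _ _).trans (by have := hM s.1 s.2; linarith)
  have hle : ∀ (x : E) (s : E), s ∈ S → ‖x - s‖ ≤ r x := fun x s hs =>
    le_ciSup (hbdd x) (⟨s, hs⟩ : S)
  have hrnn : ∀ x, 0 ≤ r x := fun x => (norm_nonneg (x - s₀)).trans (hle x s₀ hs₀)
  have hlip : ∀ x y : E, r x ≤ r y + ‖x - y‖ := by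
    intro x y
    refine Real.iSup_le (fun s => ?_) (add_nonneg (hrnn y) (norm_nonneg _))
    calc ‖x - s.1‖ = ‖(y - s.1) + (x - y)‖ := by rw [show (y - s.1) + (x - y) = x - s.1 by abel]
      _ ≤ ‖y - s.1‖ + ‖x - y‖ := norm_add_le _ _
      _ ≤ r y + ‖x - y‖ := by have := hle y s.1 s.2; linarith
  have hbddB : BddBelow (Set.range r) := ⟨0, by rintro _ ⟨x, rfl⟩; exact hrnn x⟩
  set R : ℝ := ⨅ x : E, r x with hR
  have hRle : ∀ x, R ≤ r x := fun x => ciInf_le hbddB x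
  have hRnn : 0 ≤ R := le_ciInf hrnn
  -- key estimate
  have key : ∀ x y : E, ‖x - y‖ ^ 2 ≤ 2 * r x ^ 2 + 2 * r y ^ 2 - 4 * R ^ 2 := by
    intro x y
    refine le_of_forall_pos_le_add ?_
    intro ε hε
    set δ : ℝ := ε / (8 * R + 1) with hδdef
    have hδ : 0 < δ := div_pos hε (by linarith)
    set m : E := (2:ℝ)⁻¹ • (x + y) with hm
    obtain ⟨s, hs⟩ : ∃ s : S, r m - δ < ‖m - s.1‖ :=
      exists_lt_of_lt_ciSup (by linarith [hRle m] : r m - δ < r m)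
    have hpar := parallelogram_law_with_norm ℂ (x - s.1) (y - s.1)
    have hsum : (x - s.1) + (y - s.1) = (2:ℝ) • (m - s.1) := by
      rw [hm]; module
    have hdiff : (x - s.1) - (y - s.1) = x - y := by abel
    rw [hsum, hdiff, norm_smul] at hpar
    have hxs : ‖x - s.1‖ ≤ r x := hle x s.1 s.2
    have hys : ‖y - s.1‖ ≤ r y := hle y s.1 s.2
    have hms : R - δ < ‖m - s.1‖ := lt_of_le_of_lt (by linarith [hRle m]) hs
    have hms0 : (0:ℝ) ≤ ‖m - s.1‖ := norm_nonneg _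
    have hmssq : R ^ 2 - 2 * R * δ ≤ ‖m - s.1‖ ^ 2 := by
      rcases le_or_gt δ R with hc | hc
      · nlinarith [sq_nonneg (‖m - s.1‖ - (R - δ))]
      · nlinarith [sq_nonneg ‖m - s.1‖, sq_nonneg (R - δ)]
    have h8 : 8 * R * δ ≤ ε := by
      have h9 : (8 * R + 1) * δ = ε := by rw [hδdef]; field_simp [(ne_of_gt (by linarith) : (8 * R + 1) ≠ 0)]
      nlinarith
    have hn : ‖(2:ℝ)‖ = 2 := by norm_num
    rw [hn] at hpar
    nlinarith [norm_nonneg (x - s.1), norm_nonneg (y - s.1), hrnn x, hrnn y]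
  -- minimizing sequence
  have hmin : ∀ n : ℕ, ∃ x : E, r x < R + 1 / (n + 1) := by
    intro n
    refine exists_lt_of_ciInf_lt ?_
    have : (0:ℝ) < 1 / (n + 1) := by positivity
    linarith
  choose u hu using hmin
  -- abstract Cauchy estimate
  have habs : ∀ h a b : ℝ, 0 < a → a ≤ h → 0 < b → b ≤ h → h ≤ 1 →
      ∀ n m : ℕ, r (u n) < R + a → r (u m) < R + b →
      ‖u n - u m‖ ^ 2 ≤ (8 * R + 8) * h := by
    intro h a b ha hah hb hbh hh1 n m hn hm
    have h1 : r (u n) ^ 2 ≤ (R + a) ^ 2 := by nlinarith [hrnn (u n)]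
    have h2 : r (u m) ^ 2 ≤ (R + b) ^ 2 := by nlinarith [hrnn (u m)]
    have h3 := key (u n) (u m)
    nlinarith [sq_nonneg h, sq_nonneg (a - h), sq_nonneg (b - h)]
  have hcauchy : CauchySeq u := by
    rw [Metric.cauchySeq_iff]
    intro ε hε
    obtain ⟨N, hN⟩ := exists_nat_gt ((8 * R + 8) / ε ^ 2)
    refine ⟨N, fun n hn m hm => ?_⟩
    have hNpos : (0:ℝ) < (N:ℝ) + 1 := by positivity
    set h : ℝ := 1 / ((N:ℝ) + 1) with hhdef
    have hh0 : 0 < h := by positivity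
    have hh1 : h ≤ 1 := by rw [hhdef, div_le_one hNpos]; linarith [show (0:ℝ) ≤ (N:ℝ) from Nat.cast_nonneg N]
    have hinv : ∀ k : ℕ, N ≤ k → 1 / ((k:ℝ) + 1) ≤ h := by
      intro k hk
      have hc : (N:ℝ) ≤ (k:ℝ) := Nat.cast_le.mpr hk
      rw [hhdef]
      apply one_div_le_one_div_of_le hNpos
      linarith
    have hsq : ‖u n - u m‖ ^ 2 ≤ (8 * R + 8) * h :=
      habs h (1 / ((n:ℝ)+1)) (1 / ((m:ℝ)+1)) (by positivity) (hinv n hn)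
        (by positivity) (hinv m hm) hh1 n m (by push_cast; exact_mod_cast hu n) (by push_cast; exact_mod_cast hu m)
    have hlt : (8 * R + 8) * h < ε ^ 2 := by
      rw [hhdef, mul_one_div, div_lt_iff₀ hNpos]
      have hgt : (8 * R + 8) / ε ^ 2 < (N:ℝ) + 1 := by linarith
      rw [div_lt_iff₀ (by positivity)] at hgt
      linarith
    rw [dist_eq_norm]
    nlinarith [norm_nonneg (u n - u m)]
  obtain ⟨z, hz⟩ := cauchySeq_tendsto_of_complete hcauchy
  have hrz : r z = R := by
    refine le_antisymm ?_ (hRle z)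
    refine le_of_forall_pos_le_add ?_
    intro ε hε
    obtain ⟨N₁, hN₁⟩ := (Metric.tendsto_atTop.mp hz) (ε / 2) (by linarith)
    obtain ⟨N₂, hN₂⟩ := exists_nat_one_div_lt (show (0:ℝ) < ε / 2 by linarith)
    set n := max N₁ N₂ with hndef
    have ha := hN₁ n (le_max_left _ _)
    have hb : 1 / ((n:ℝ) + 1) < ε / 2 := by
      refine lt_of_le_of_lt ?_ hN₂
      apply one_div_le_one_div_of_le (by positivity)
      have : (N₂:ℝ) ≤ (n:ℝ) := Nat.cast_le.mpr (le_max_right N₁ N₂)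
      linarith
    have hzn : ‖z - u n‖ < ε / 2 := by rwa [dist_comm, dist_eq_norm] at ha
    have h1 := hlip z (u n)
    have h2 := hu n
    have h3 : r (u n) < R + ε / 2 := lt_of_lt_of_le h2 (by push_cast; linarith)
    linarith
  refine ⟨z, fun T hTiso hTS => ?_⟩
  have hrT : r (T z) = R := by
    refine le_antisymm ?_ (hRle _)
    refine Real.iSup_le (fun s => ?_) hRnn
    have hmem : s.1 ∈ T '' S := hTS.symm ▸ s.2
    obtain ⟨t, htS, hts⟩ := hmem
    rw [← hts]
    calc ‖T z - T t‖ = ‖z - t‖ := hTiso z t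
      _ ≤ r z := hle z t htS
      _ = R := hrz
  have h0 : ‖z - T z‖ ^ 2 ≤ 0 := by
    have hk := key z (T z)
    rw [hrz, hrT] at hk
    linarith
  have hz0 : ‖z - T z‖ = 0 := by nlinarith [norm_nonneg (z - T z)]
  exact (norm_sub_eq_zero_iff.mp hz0).symm



set_option maxHeartbeats 1000000 in
theorem stmt9 {G : Type*} [Group G] [TopologicalSpace G] [IsTopologicalGroup G]
    [LocallyCompactSpace G] [SecondCountableTopology G]
    [MeasurableSpace G] [BorelSpace G]
    (μG : Measure G) [μG.IsHaarMeasure] [μG.IsMulRightInvariant]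
    (Γ : Subgroup G) [DiscreteTopology Γ]
    (F : Set G) (hFmeas : MeasurableSet F)
    (hFdom : IsFundamentalDomain Γ.op F μG)
    (μ : Measure (G ⧸ Γ))
    (hμ : μ = Measure.map (QuotientGroup.mk : G → G ⧸ Γ) (μG.restrict F))
    [SMulInvariantMeasure G (G ⧸ Γ) μ]
    (G_ : ℕ → Subgroup G) (hgen : (⨆ n, G_ n) = ⊤)
    (hcomm : ∀ n : ℕ, ∀ g ∈ G_ n, ∀ h ∈ G_ (n + 1), Commute g h)
    (hnoinv : ∀ n : ℕ, ∀ f : Lp ℂ 2 μ,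
      (∀ g ∈ G_ n, (fun x => f (g⁻¹ • x)) =ᵐ[μ] f) → f = 0)
    (hgap : ∃ i : ℕ, ∃ Q : Set G, Q ⊆ (G_ i : Set G) ∧ IsCompact Q ∧
      ∃ C : ℝ, 0 < C ∧ ∀ f : Lp ℂ 2 μ,
        ‖f‖ ≤ C * ⨆ g : Q, (eLpNorm (fun x => f ((g : G)⁻¹ • x) - f x) 2 μ).toReal) :
    ∀ c : G → Lp ℂ 2 μ, Continuous c →
      (∀ g h : G, (c (g * h) : G ⧸ Γ → ℂ) =ᵐ[μ] fun x => c g x + c h (g⁻¹ • x)) →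
      ∃ ξ : Lp ℂ 2 μ, ∀ g : G, (c g : G ⧸ Γ → ℂ) =ᵐ[μ] fun x => ξ x - ξ (g⁻¹ • x) := by
  obtain ⟨i, Q, hQi, hQc, C, hC, hgapC⟩ := hgap
  intro c hc hcoc
  -- the translation maps and their measure-preservation
  have hmeas : ∀ g : G, Measurable (fun x : G ⧸ Γ => g⁻¹ • x) := by
    intro g
    rw [QuotientGroup.measurable_from_quotient]
    have : ((fun x : G ⧸ Γ => g⁻¹ • x) ∘ (QuotientGroup.mk : G → G ⧸ Γ))
        = (QuotientGroup.mk : G → G ⧸ Γ) ∘ (fun y : G => g⁻¹ * y) := by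
      funext y; rfl
    rw [this]
    exact QuotientGroup.measurable_coe.comp (measurable_const_mul _)
  have hτ : ∀ g : G, MeasurePreserving (fun x : G ⧸ Γ => g⁻¹ • x) μ μ := by
    intro g
    refine ⟨hmeas g, ?_⟩
    ext s hs
    rw [Measure.map_apply (hmeas g) hs]
    exact SMulInvariantMeasure.measure_preimage_smul g⁻¹ hs
  -- the Koopman representation
  set π : G → Lp ℂ 2 μ →+ Lp ℂ 2 μ := fun g => Lp.compMeasurePreserving _ (hτ g) with hπdef
  have hπ_ae : ∀ (g : G) (f : Lp ℂ 2 μ), ⇑(π g f) =ᵐ[μ] fun x => f (g⁻¹ • x) :=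
    fun g f => Lp.coeFn_compMeasurePreserving f (hτ g)
  have hπ_norm : ∀ (g : G) (f : Lp ℂ 2 μ), ‖π g f‖ = ‖f‖ :=
    fun g f => Lp.norm_compMeasurePreserving f (hτ g)
  have hπ_mul : ∀ (g h : G) (f : Lp ℂ 2 μ), π g (π h f) = π (g * h) f := by
    intro g h f
    refine Lp.ext ?_
    have h1 : ⇑(π g (π h f)) =ᵐ[μ] (⇑(π h f)) ∘ (fun x : G ⧸ Γ => g⁻¹ • x) :=
      hπ_ae g (π h f)
    have h2 : (⇑(π h f)) ∘ (fun x : G ⧸ Γ => g⁻¹ • x)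
        =ᵐ[μ] (fun x => f (h⁻¹ • x)) ∘ (fun x : G ⧸ Γ => g⁻¹ • x) :=
      (hτ g).quasiMeasurePreserving.ae_eq_comp (hπ_ae h f)
    have h3 : ((fun x => f (h⁻¹ • x)) ∘ (fun x : G ⧸ Γ => g⁻¹ • x))
        = fun x => f ((g * h)⁻¹ • x) := by
      funext x
      simp [Function.comp, mul_inv_rev, mul_smul]
    refine (h1.trans (h2.trans ?_)).trans (hπ_ae (g * h) f).symm
    rw [h3]
  have hπ_one : ∀ f : Lp ℂ 2 μ, π 1 f = f := by
    intro f
    refine Lp.ext ((hπ_ae 1 f).trans ?_)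
    simp
  -- cocycle identity in Lp form
  have hcl : ∀ g h : G, c (g * h) = c g + π g (c h) := by
    intro g h
    refine Lp.ext ((hcoc g h).trans ?_)
    have h1 : ⇑(c g + π g (c h)) =ᵐ[μ] ⇑(c g) + ⇑(π g (c h)) := Lp.coeFn_add _ _
    have h2 := hπ_ae g (c h)
    filter_upwards [h1, h2] with x hx1 hx2
    rw [hx1, Pi.add_apply, hx2]
  have hc1 : c 1 = 0 := by
    have := hcl 1 1
    rw [one_mul, hπ_one] at this
    exact left_eq_add.mp this
  have hcinv : ∀ g : G, c g⁻¹ = - π g⁻¹ (c g) := by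
    intro g
    have := hcl g⁻¹ g
    rw [inv_mul_cancel, hc1] at this
    exact eq_neg_of_add_eq_zero_left this.symm
  -- gap in operator form
  have hgap' : ∀ f : Lp ℂ 2 μ, ‖f‖ ≤ C * ⨆ a : Q, ‖π (a:G) f - f‖ := by
    intro f
    have h := hgapC f
    have heq : (⨆ a : Q, (eLpNorm (fun x => f ((a:G)⁻¹ • x) - f x) 2 μ).toReal)
        = ⨆ a : Q, ‖π (a:G) f - f‖ := by
      refine iSup_congr fun a => ?_
      rw [Lp.norm_def]
      congr 1
      refine eLpNorm_congr_ae ?_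
      filter_upwards [Lp.coeFn_sub (π (a:G) f) f, hπ_ae (a:G) f] with x hx1 hx2
      rw [hx1, Pi.sub_apply, hx2]
    rwa [heq] at h
  rcases Set.eq_empty_or_nonempty Q with hQe | hQne
  · -- degenerate case: Q empty, the whole space is trivial
    haveI : IsEmpty ↥Q := by rw [hQe]; exact Set.isEmpty_coe_sort.mpr rfl
    have hzero : ∀ f : Lp ℂ 2 μ, f = 0 := by
      intro f
      have h := hgap' f
      rw [Real.iSup_of_isEmpty] at h
      rw [mul_zero] at h
      exact norm_le_zero_iff.mp h
    refine ⟨0, fun g => ?_⟩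
    have h1 : ⇑(c g) =ᵐ[μ] (0 : G ⧸ Γ → ℂ) := by
      rw [hzero (c g)]; exact Lp.coeFn_zero ℂ 2 μ
    have h2 : (⇑(0 : Lp ℂ 2 μ)) ∘ (fun x : G ⧸ Γ => g⁻¹ • x) =ᵐ[μ]
        (0 : G ⧸ Γ → ℂ) ∘ (fun x : G ⧸ Γ => g⁻¹ • x) :=
      (hτ g).quasiMeasurePreserving.ae_eq_comp (Lp.coeFn_zero ℂ 2 μ)
    filter_upwards [h1, h2, Lp.coeFn_zero ℂ 2 μ (α := G ⧸ Γ)] with x hx1 hx2 hx3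
    simp only [Function.comp] at hx2
    rw [hx1, hx3, hx2]
    simp
  -- main case
  haveI hQne' : Nonempty ↥Q := hQne.to_subtype
  obtain ⟨a₀, ha₀⟩ := hQne
  obtain ⟨K, hK⟩ : ∃ K : ℝ, ∀ a ∈ Q, ‖c a‖ ≤ K := by
    obtain ⟨a', ha'Q, hmax⟩ := hQc.exists_isMaxOn ⟨a₀, ha₀⟩ (hc.norm.continuousOn)
    exact ⟨‖c a'‖, fun a ha => hmax ha⟩
  set e : Lp ℂ 2 μ → G → Lp ℂ 2 μ := fun ξ a => c a - ξ + π a ξ with hedef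
  set Φ : Lp ℂ 2 μ → ℝ := fun ξ => ⨆ a : Q, ‖e ξ (a:G)‖ with hΦdef
  have hbddΦ : ∀ ξ, BddAbove (Set.range fun a : Q => ‖e ξ (a:G)‖) := by
    intro ξ
    refine ⟨K + 2 * ‖ξ‖, ?_⟩
    rintro _ ⟨a, rfl⟩
    calc ‖c (a:G) - ξ + π (a:G) ξ‖ ≤ ‖c (a:G) - ξ‖ + ‖π (a:G) ξ‖ := norm_add_le _ _
      _ ≤ ‖c (a:G)‖ + ‖ξ‖ + ‖π (a:G) ξ‖ := by linarith [norm_sub_le (c (a:G)) ξ]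
      _ ≤ K + 2 * ‖ξ‖ := by
          rw [hπ_norm]
          linarith [hK (a:G) a.2]
  have hΦle : ∀ ξ, ∀ a ∈ Q, ‖e ξ a‖ ≤ Φ ξ := fun ξ a ha =>
    le_ciSup (hbddΦ ξ) (⟨a, ha⟩ : Q)
  have hΦnn : ∀ ξ, 0 ≤ Φ ξ := fun ξ =>
    (norm_nonneg (e ξ a₀)).trans (hΦle ξ a₀ ha₀)
  have hediff : ∀ ξ η : Lp ℂ 2 μ, ∀ a : G,
      π a (ξ - η) - (ξ - η) = e ξ a - e η a := by
    intro ξ η a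
    rw [hedef]
    simp only [map_sub]
    abel
  have hgapS : ∀ ξ η : Lp ℂ 2 μ, ‖ξ - η‖ ≤ C * (Φ ξ + Φ η) := by
    intro ξ η
    refine (hgap' (ξ - η)).trans (mul_le_mul_of_nonneg_left ?_ hC.le)
    refine Real.iSup_le (fun a => ?_) (add_nonneg (hΦnn ξ) (hΦnn η))
    rw [hediff ξ η (a:G)]
    calc ‖e ξ (a:G) - e η (a:G)‖ ≤ ‖e ξ (a:G)‖ + ‖e η (a:G)‖ := norm_sub_le _ _
      _ ≤ Φ ξ + Φ η := add_le_add (hΦle ξ (a:G) a.2) (hΦle η (a:G) a.2)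
  set S : Set (Lp ℂ 2 μ) := {ξ | Φ ξ ≤ Φ 0} with hSdef
  have hS0 : (0 : Lp ℂ 2 μ) ∈ S := by show Φ 0 ≤ Φ 0; exact le_refl _
  have hSb : Bornology.IsBounded S := by
    rw [isBounded_iff_forall_norm_le]
    refine ⟨C * (Φ 0 + Φ 0), fun ξ hξ => ?_⟩
    have h1 := hgapS ξ 0
    rw [sub_zero] at h1
    refine h1.trans (mul_le_mul_of_nonneg_left ?_ hC.le)
    exact add_le_add hξ (le_refl _)
  set α : G → Lp ℂ 2 μ → Lp ℂ 2 μ := fun b ξ => π b ξ + c b with hαdef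
  have hkey : ∀ b ∈ G_ (i+1), ∀ a ∈ Q, ∀ ξ, e (α b ξ) a = π b (e ξ a) := by
    intro b hb a ha ξ
    have hab : a * b = b * a := hcomm i a (hQi ha) b hb
    have hrel : c a + π a (c b) = c b + π b (c a) := by
      have h1 := hcl a b
      have h2 := hcl b a
      rw [hab] at h1
      exact h1.symm.trans h2
    have hcommπ : π a (π b ξ) = π b (π a ξ) := by
      rw [hπ_mul, hπ_mul, hab]
    have hπbca : π b (c a) = c a + π a (c b) - c b := by
      rw [hrel]; abel
    show c a - (π b ξ + c b) + π a (π b ξ + c b) = π b (c a - ξ + π a ξ)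
    rw [map_add (π a), map_add (π b), map_sub (π b), hπbca, hcommπ]
    abel
  have hΦα : ∀ b ∈ G_ (i+1), ∀ ξ, Φ (α b ξ) = Φ ξ := by
    intro b hb ξ
    refine iSup_congr fun a => ?_
    rw [hkey b hb (a:G) a.2 ξ, hπ_norm]
  have hαinv : ∀ (b : G) (ξ : Lp ℂ 2 μ), α b⁻¹ (α b ξ) = ξ := by
    intro b ξ
    show π b⁻¹ (π b ξ + c b) + c b⁻¹ = ξ
    rw [map_add, hπ_mul, inv_mul_cancel, hπ_one, hcinv b]
    abel
  have hmapS : ∀ b ∈ G_ (i+1), α b '' S = S := by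
    intro b hb
    apply subset_antisymm
    · rintro _ ⟨ξ, hξ, rfl⟩
      show Φ (α b ξ) ≤ Φ 0
      rw [hΦα b hb]
      exact hξ
    · intro ξ hξ
      refine ⟨α b⁻¹ ξ, ?_, ?_⟩
      · show Φ (α b⁻¹ ξ) ≤ Φ 0
        rw [hΦα b⁻¹ ((G_ (i+1)).inv_mem hb)]
        exact hξ
      · have := hαinv b⁻¹ ξ
        rwa [inv_inv] at this
  have hαiso : ∀ (b : G) (x y : Lp ℂ 2 μ), ‖α b x - α b y‖ = ‖x - y‖ := by
    intro b x y
    have h1 : α b x - α b y = π b (x - y) := by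
      show π b x + c b - (π b y + c b) = π b (x - y)
      rw [map_sub]; abel
    rw [h1, hπ_norm]
  obtain ⟨z, hzfix⟩ := cheb_fixed S ⟨0, hS0⟩ hSb
  have hfixb : ∀ b ∈ G_ (i+1), c b = z - π b z := by
    intro b hb
    have h := hzfix (α b) (hαiso b) (hmapS b hb)
    have h2 : π b z + c b = z := h
    exact eq_sub_of_add_eq' h2
  set c' : G → Lp ℂ 2 μ := fun g => c g - z + π g z with hc'def
  have hc'c : ∀ g h : G, c' (g * h) = c' g + π g (c' h) := by
    intro g h
    show c (g * h) - z + π (g * h) z = (c g - z + π g z) + π g (c h - z + π h z)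
    rw [hcl g h, map_add, map_sub, hπ_mul]
    abel
  have hc'b : ∀ b ∈ G_ (i+1), c' b = 0 := by
    intro b hb
    show c b - z + π b z = 0
    rw [hfixb b hb]
    abel
  have hinv0 : ∀ (n : ℕ) (v : Lp ℂ 2 μ), (∀ s ∈ G_ n, π s v = v) → v = 0 := by
    intro n v hv
    refine hnoinv n v (fun s hs => ?_)
    have h := hπ_ae s v
    rw [hv s hs] at h
    exact h.symm
  have hstep_up : ∀ n : ℕ, (∀ s ∈ G_ n, c' s = 0) → ∀ g ∈ G_ (n+1), c' g = 0 := by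
    intro n hzero g hg
    refine hinv0 n (c' g) (fun s hs => ?_)
    have hsg : s * g = g * s := hcomm n s hs g hg
    have h1 := hc'c s g
    have h2 := hc'c g s
    rw [hsg] at h1
    have h3 : c' s + π s (c' g) = c' g + π g (c' s) := h1.symm.trans h2
    rwa [hzero s hs, map_zero, zero_add, add_zero] at h3
  have hstep_down : ∀ n : ℕ, (∀ s ∈ G_ (n+1), c' s = 0) → ∀ g ∈ G_ n, c' g = 0 := by
    intro n hzero g hg
    refine hinv0 (n+1) (c' g) (fun s hs => ?_)
    have hgs : g * s = s * g := hcomm n g hg s hs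
    have h1 := hc'c g s
    have h2 := hc'c s g
    rw [hgs] at h1
    have h3 : c' g + π g (c' s) = c' s + π s (c' g) := h1.symm.trans h2
    rw [hzero s hs, map_zero, add_zero, zero_add] at h3
    exact h3.symm
  have hall : ∀ n : ℕ, ∀ g ∈ G_ n, c' g = 0 := by
    have hup : ∀ k : ℕ, ∀ g ∈ G_ (i+1+k), c' g = 0 := by
      intro k
      induction k with
      | zero => exact hc'b
      | succ k ih => exact hstep_up (i+1+k) ih
    have hdown : ∀ j : ℕ, ∀ g ∈ G_ (i+1-j), c' g = 0 := by
      intro j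
      induction j with
      | zero => exact hc'b
      | succ j ih =>
        rcases Nat.lt_or_ge j (i+1) with hj | hj
        · have heq : i+1-(j+1)+1 = i+1-j := by omega
          exact hstep_down (i+1-(j+1)) (by rw [heq]; exact ih)
        · have heq : i+1-(j+1) = i+1-j := by omega
          rw [heq]; exact ih
    intro n g hg
    rcases Nat.lt_or_ge n (i+1) with hn | hn
    · have heq : i+1-(i+1-n) = n := by omega
      exact hdown (i+1-n) g (by rw [heq]; exact hg)
    · have heq : i+1+(n-(i+1)) = n := by omega
      exact hup (n-(i+1)) g (by rw [heq]; exact hg)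
  have htop : ∀ g : G, c' g = 0 := by
    have hone : c' 1 = 0 := by
      show c 1 - z + π 1 z = 0
      rw [hc1, hπ_one]
      abel
    set K' : Subgroup G :=
      { carrier := {g | c' g = 0}
        one_mem' := hone
        mul_mem' := by
          intro a b ha hb
          show c' (a * b) = 0
          rw [hc'c a b, ha, hb, map_zero, add_zero]
        inv_mem' := by
          intro g hg
          show c' g⁻¹ = 0
          have h1 := hc'c g⁻¹ g
          rw [inv_mul_cancel, hone, hg, map_zero, add_zero] at h1
          exact h1.symm } with hK'def
    have hle : (⊤ : Subgroup G) ≤ K' := by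
      rw [← hgen]
      exact iSup_le (fun n g hg => hall n g hg)
    exact fun g => hle (Subgroup.mem_top g)
  refine ⟨z, fun g => ?_⟩
  have h0 : c g = z - π g z := by
    have h := htop g
    have h2 : c g - (z - π g z) = c' g := by
      show c g - (z - π g z) = c g - z + π g z
      abel
    rw [h] at h2
    exact sub_eq_zero.mp h2
  rw [h0]
  filter_upwards [Lp.coeFn_sub z (π g z), hπ_ae g z] with x hx1 hx2
  rw [hx1, Pi.sub_apply, hx2]
end

section
/- Let X be a connected, locally finite simple graph with vertex set V, and let G be a locally compact second countable group acting on V by graph automorphisms (each g ∈ G preserves adjacency), transitively on V, and with compact vertex stabilizers {g ∈ G : g·v = v} for every v ∈ V. Let Γ ≤ G be a discrete subgroup and fix a vertex v₀ ∈ V. Suppose Ã ⊆ V is a Γ-invariant set of vertices such that the set of edges of X joining a vertex of Ã to a vertex of V \ Ã meets only finitely many Γ-orbits of edges. Put E := {g ∈ G : g⁻¹·v₀ ∈ Ã}. Then E is invariant under right translation by Γ, and for every g ∈ G there is a compact set C ⊆ G with E △ gE ⊆ C·Γ; equivalently, the image of E △ gE in the quotient space G/Γ has compact closure. -/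
open MeasureTheory Set Pointwise

private lemma cross_lemma {V : Type*} {X : SimpleGraph V} {A : Set V} :
    ∀ {x y : V} (p : X.Walk x y), x ∈ A → y ∉ A →
      ∃ a b, X.Adj a b ∧ a ∈ A ∧ b ∉ A ∧ a ∈ p.support := by
  intro x y p
  induction p with
  | nil => intro hx hy; exact absurd hx hy
  | @cons x u y h q ih =>
    intro hx hy
    by_cases hb : u ∈ A
    · obtain ⟨a, b, hab, ha, hbn, hmem⟩ := ih hb hy
      exact ⟨a, b, hab, ha, hbn, by
        rw [SimpleGraph.Walk.support_cons]; exact List.mem_cons_of_mem _ hmem⟩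
    · exact ⟨x, u, h, hx, hb, by simp [SimpleGraph.Walk.support_cons]⟩

theorem stmt12 {G V : Type*} [Group G] [TopologicalSpace G] [IsTopologicalGroup G]
    [LocallyCompactSpace G] [SecondCountableTopology G]
    (X : SimpleGraph V) (hconn : X.Connected) (hlf : X.LocallyFinite)
    [MulAction G V]
    (hauto : ∀ (g : G) (v w : V), X.Adj v w → X.Adj (g • v) (g • w))
    [MulAction.IsPretransitive G V]
    (hstab : ∀ v : V, IsCompact {g : G | g • v = v})
    (Γ : Subgroup G) [DiscreteTopology Γ]
    (v₀ : V) (Atil : Set V) (hinv : ∀ γ : Γ, (γ : G) • Atil = Atil)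
    (hedge : Set.Finite (Quotient.mk (MulAction.orbitRel Γ (V × V)) ''
      {p : V × V | X.Adj p.1 p.2 ∧ p.1 ∈ Atil ∧ p.2 ∉ Atil})) :
    (∀ g ∈ {k : G | k⁻¹ • v₀ ∈ Atil}, ∀ γ : Γ, g * (γ : G) ∈ {k : G | k⁻¹ • v₀ ∈ Atil}) ∧
    ∀ g : G, ∃ C : Set G, IsCompact C ∧
      symmDiff {k : G | k⁻¹ • v₀ ∈ Atil} (g • {k : G | k⁻¹ • v₀ ∈ Atil})
        ⊆ C * (Γ : Set G) := by
  constructor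
  · intro g hg γ
    have h1 : ((g * (γ : G))⁻¹) • v₀ = (γ : G)⁻¹ • (g⁻¹ • v₀) := by
      rw [mul_inv_rev, mul_smul]
    show ((g * (γ : G))⁻¹) • v₀ ∈ Atil
    rw [h1]
    have h2 := hinv γ⁻¹
    rw [Subgroup.coe_inv] at h2
    rw [← h2]
    exact Set.smul_mem_smul_set hg
  · intro g
    obtain ⟨p⟩ := hconn.preconnected v₀ (g • v₀)
    set S : Set (V × V) := {p : V × V | X.Adj p.1 p.2 ∧ p.1 ∈ Atil ∧ p.2 ∉ Atil} with hS
    set R : Set (V × V) :=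
      Quotient.out '' (Quotient.mk (MulAction.orbitRel Γ (V × V)) '' S) with hR
    have hRfin : R.Finite := hedge.image _
    have hsupfin : {u : V | u ∈ p.support}.Finite := p.support.finite_toSet
    refine ⟨⋃ u ∈ {u : V | u ∈ p.support}, ⋃ r ∈ R, {h : G | h • r.1 = u}, ?_, ?_⟩
    · apply hsupfin.isCompact_biUnion
      intro u _
      apply hRfin.isCompact_biUnion
      intro r _
      obtain ⟨h₀, hh₀⟩ := MulAction.exists_smul_eq G r.1 u
      have heq : {h : G | h • r.1 = u} = (h₀ * ·) '' {g : G | g • r.1 = r.1} := by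
        ext h
        simp only [Set.mem_image, Set.mem_setOf_eq]
        constructor
        · intro hh
          refine ⟨h₀⁻¹ * h, ?_, by group⟩
          rw [mul_smul, hh]
          rw [← hh₀, inv_smul_smul]
        · rintro ⟨a, ha, rfl⟩
          rw [mul_smul, ha, hh₀]
      rw [heq]
      exact (hstab r.1).image (continuous_mul_left h₀)
    · intro k hk
      have hcase : (k⁻¹ • v₀ ∈ Atil ∧ k⁻¹ • (g • v₀) ∉ Atil) ∨
          (k⁻¹ • (g • v₀) ∈ Atil ∧ k⁻¹ • v₀ ∉ Atil) := by
        have hms : k ∈ g • {k : G | k⁻¹ • v₀ ∈ Atil} ↔ k⁻¹ • (g • v₀) ∈ Atil := by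
          rw [Set.mem_smul_set_iff_inv_smul_mem]
          show (g⁻¹ * k)⁻¹ • v₀ ∈ Atil ↔ _
          rw [mul_inv_rev, inv_inv, mul_smul]
        rcases Set.mem_symmDiff.mp hk with ⟨h1, h2⟩ | ⟨h1, h2⟩
        · exact Or.inl ⟨h1, fun hmem => h2 (hms.mpr hmem)⟩
        · exact Or.inr ⟨hms.mp h1, h2⟩
      let fk : X →g X := ⟨fun v => k⁻¹ • v, fun {a b} h => hauto k⁻¹ a b h⟩
      have key : ∃ a b u, X.Adj a b ∧ a ∈ Atil ∧ b ∉ Atil ∧ u ∈ p.support ∧ a = k⁻¹ • u := by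
        rcases hcase with ⟨h1, h2⟩ | ⟨h1, h2⟩
        · obtain ⟨a, b, hab, ha, hb, hmem⟩ := cross_lemma (p.map fk) h1 h2
          rw [SimpleGraph.Walk.support_map, List.mem_map] at hmem
          obtain ⟨u, hu, hau⟩ := hmem
          exact ⟨a, b, u, hab, ha, hb, hu, hau.symm⟩
        · obtain ⟨a, b, hab, ha, hb, hmem⟩ := cross_lemma (p.map fk).reverse h1 h2
          rw [SimpleGraph.Walk.support_reverse, List.mem_reverse,
            SimpleGraph.Walk.support_map, List.mem_map] at hmem
          obtain ⟨u, hu, hau⟩ := hmem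
          exact ⟨a, b, u, hab, ha, hb, hu, hau.symm⟩
      obtain ⟨a, b, u, hab, ha, hb, hu, hau⟩ := key
      have habS : (a, b) ∈ S := ⟨hab, ha, hb⟩
      set r : V × V := Quotient.out (Quotient.mk (MulAction.orbitRel Γ (V × V)) (a, b))
        with hrdef
      have hrR : r ∈ R := ⟨_, Set.mem_image_of_mem _ habS, rfl⟩
      have hmk : Quotient.mk (MulAction.orbitRel Γ (V × V)) r
          = Quotient.mk (MulAction.orbitRel Γ (V × V)) (a, b) := Quotient.out_eq _
      have hrel : r ∈ MulAction.orbit Γ ((a, b) : V × V) :=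
        MulAction.orbitRel_apply.mp (Quotient.exact hmk)
      obtain ⟨γ, hγ⟩ := MulAction.mem_orbit_iff.mp hrel
      have hr1 : (γ : G) • a = r.1 := by
        have : (γ • ((a, b) : V × V)).1 = r.1 := by rw [hγ]
        simpa [Subgroup.smul_def] using this
      refine Set.mem_mul.mpr ⟨k * (γ : G)⁻¹, ?_, (γ : G), γ.2, by group⟩
      simp only [Set.mem_iUnion, Set.mem_setOf_eq]
      refine ⟨u, hu, r, hrR, ?_⟩
      rw [← hr1, hau, smul_smul, smul_smul]
      have : k * (γ : G)⁻¹ * (γ : G) * k⁻¹ = 1 := by group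
      rw [this, one_smul]
end

section
/- Let X be a connected, locally finite simple graph with vertex set V, and let G be a unimodular locally compact second countable group with Haar measure μ_G acting on V by graph automorphisms, transitively on V, and with compact open vertex stabilizers. Let Γ ≤ G be a discrete subgroup admitting a finite index subgroup Γ' ≤ Γ whose action on V is free, let μ denote the G-invariant quotient measure on G/Γ, and fix v₀ ∈ V. Suppose Ã ⊆ V is a Γ-invariant set of vertices meeting infinitely many Γ-orbits and whose complement V \ Ã also meets infinitely many Γ-orbits. Put E := {g ∈ G : g⁻¹·v₀ ∈ Ã} and let B ⊆ G/Γ be the image of E under the quotient map G → G/Γ. Then μ(B) = ∞ and μ((G/Γ) \ B) = ∞. -/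
open MeasureTheory Set Pointwise


private theorem stmt13_aux {G V : Type*} [Group G] [TopologicalSpace G] [IsTopologicalGroup G]
    [LocallyCompactSpace G] [SecondCountableTopology G]
    [MeasurableSpace G] [BorelSpace G]
    (μG : Measure G) [μG.IsHaarMeasure] [μG.IsMulRightInvariant]
    [MulAction G V] [MulAction.IsPretransitive G V]
    (hstab : ∀ v : V, IsCompact {g : G | g • v = v} ∧ IsOpen {g : G | g • v = v})
    (Γ : Subgroup G) [DiscreteTopology Γ]
    (Γ' : Subgroup G) (hle : Γ' ≤ Γ) (hfi : Γ'.relIndex Γ ≠ 0)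
    (hfree : ∀ γ ∈ Γ', ∀ v : V, γ • v = v → γ = 1)
    (F : Set G) (hFmeas : MeasurableSet F)
    (hFdom : IsFundamentalDomain Γ.op F μG)
    (μ : Measure (G ⧸ Γ))
    (hμ : μ = Measure.map (QuotientGroup.mk : G → G ⧸ Γ) (μG.restrict F))
    (v₀ : V) (A : Set V)
    (hAinf : ((Quotient.mk (MulAction.orbitRel Γ V)) '' A).Infinite) :
    μ ((QuotientGroup.mk : G → G ⧸ Γ) '' {g : G | g⁻¹ • v₀ ∈ A}) = ⊤ := by
  classical
  set K : Set G := {g : G | g • v₀ = v₀} with hKdef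
  have hK0 : μG K ≠ 0 := ((hstab v₀).2.measure_pos μG ⟨1, by simp⟩).ne'
  have hKtop : μG K ≠ ⊤ := ((hstab v₀).1.measure_lt_top).ne
  set n : ℕ := Γ'.relIndex Γ with hndef
  set T : V → Set G := fun v => {g : G | g • v = v₀} with hTdef
  have hmemT : ∀ (v : V) (g : G), g ∈ T v ↔ g⁻¹ • v₀ = v := by
    intro v g
    simp only [hTdef, mem_setOf_eq]
    constructor
    · intro h; rw [← h, inv_smul_smul]
    · intro h; rw [← h, smul_inv_smul]
  have hTE : ∀ v ∈ A, T v ⊆ {g : G | g⁻¹ • v₀ ∈ A} := by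
    intro v hv g hg
    rw [hmemT] at hg
    simpa [hg] using hv
  have hT1 : ∀ v : V, ∀ h : G, h • v = v₀ →
      T v = (fun g => h⁻¹ * g) ⁻¹' {g : G | g • v = v} := by
    intro v h hh
    ext g
    simp only [hTdef, mem_preimage, mem_setOf_eq]
    constructor
    · intro hg
      rw [mul_smul, hg, ← hh, inv_smul_smul]
    · intro hg
      rw [mul_smul] at hg
      calc g • v = h • (h⁻¹ • (g • v)) := (smul_inv_smul h _).symm
        _ = h • v := by rw [hg]
        _ = v₀ := hh
  have hTopen : ∀ v, IsOpen (T v) := by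
    intro v
    obtain ⟨h, hh⟩ := MulAction.exists_smul_eq G v v₀
    rw [hT1 v h hh]
    exact ((hstab v).2).preimage (continuous_const.mul continuous_id)
  have hTK : ∀ v, μG (T v) = μG K := by
    intro v
    obtain ⟨h, hh⟩ := MulAction.exists_smul_eq G v v₀
    have hv : v = h⁻¹ • v₀ := by rw [← hh, inv_smul_smul]
    have h2 : {g : G | g • v = v} = (fun g => g * h⁻¹) ⁻¹' ((fun g => h * g) ⁻¹' K) := by
      ext g
      simp only [hKdef, mem_preimage, mem_setOf_eq]
      constructor
      · intro hg
        calc (h * (g * h⁻¹)) • v₀ = h • (g • (h⁻¹ • v₀)) := by rw [mul_smul, mul_smul]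
          _ = h • (g • v) := by rw [← hv]
          _ = h • v := by rw [hg]
          _ = v₀ := hh
      · intro hg
        calc g • v = h⁻¹ • ((h * (g * h⁻¹)) • v₀) := by
              rw [mul_smul, mul_smul, inv_smul_smul, hv]
          _ = h⁻¹ • v₀ := by rw [hg]
          _ = v := hv.symm
    rw [hT1 v h hh, measure_preimage_mul, h2, measure_preimage_mul_right, measure_preimage_mul]
  set S : V → Set G := fun v => {g : G | g⁻¹ • v₀ ∈ MulAction.orbit Γ v} with hSdef
  have hSiff : ∀ (v : V) (g : G), g ∈ S v ↔ ∃ γ : Γ, g * (γ : G) ∈ T v := by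
    intro v g
    simp only [hSdef, mem_setOf_eq, MulAction.mem_orbit_iff, Subgroup.smul_def]
    constructor
    · rintro ⟨γ, hγ⟩
      refine ⟨γ, (hmemT v _).2 ?_⟩
      push_cast
      rw [mul_inv_rev, mul_smul, ← hγ, inv_smul_smul]
    · rintro ⟨γ, hγ⟩
      rw [hmemT] at hγ
      refine ⟨γ, ?_⟩
      rw [← hγ]
      push_cast
      rw [mul_inv_rev, mul_smul, smul_inv_smul]
  have hTS : ∀ v, T v ⊆ S v := by
    intro v g hg
    exact (hSiff v g).2 ⟨1, by simpa using hg⟩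
  have hSopen : ∀ v, IsOpen (S v) := by
    intro v
    have : S v = ⋃ γ : Γ, (fun g => g * (γ : G)) ⁻¹' (T v) := by
      ext g
      simpa [mem_iUnion] using hSiff v g
    rw [this]
    exact isOpen_iUnion fun γ => (hTopen v).preimage (continuous_id.mul continuous_const)
  have hpre : ∀ v, (QuotientGroup.mk : G → G ⧸ Γ) ⁻¹' (QuotientGroup.mk '' (T v)) = S v := by
    intro v
    ext g
    simp only [mem_preimage, mem_image]
    rw [hSiff]
    constructor
    · rintro ⟨t, ht, hq⟩
      have hγ : g⁻¹ * t ∈ Γ := (QuotientGroup.eq).1 hq.symm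
      refine ⟨⟨g⁻¹ * t, hγ⟩, ?_⟩
      simpa [← mul_assoc] using ht
    · rintro ⟨γ, hγ⟩
      refine ⟨g * (γ : G), hγ, ?_⟩
      symm
      rw [QuotientGroup.eq]
      simpa [mul_assoc] using γ.2
  have hCmeas : ∀ v, MeasurableSet ((QuotientGroup.mk : G → G ⧸ Γ) '' (T v)) := by
    intro v
    rw [measurableSet_quotient]
    show MeasurableSet ((QuotientGroup.mk : G → G ⧸ Γ) ⁻¹' _)
    rw [hpre v]
    exact (hSopen v).measurableSet
  have hμC : ∀ v, μ (QuotientGroup.mk '' (T v)) = μG (S v ∩ F) := by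
    intro v
    have hmkm : Measurable (QuotientGroup.mk : G → G ⧸ Γ) :=
      measurable_quotient_mk'' (s := QuotientGroup.leftRel Γ)
    rw [hμ, Measure.map_apply hmkm (hCmeas v)]
    show (μG.restrict F) ((QuotientGroup.mk : G → G ⧸ Γ) ⁻¹' (QuotientGroup.mk '' (T v))) = _
    rw [hpre v, Measure.restrict_apply (hSopen v).measurableSet]
  -- core lower bound
  have hQfin : Finite (Γ ⧸ Γ'.subgroupOf Γ) := (Nat.card_ne_zero.mp hfi).2
  have hlb : ∀ v, μG K ≤ (n : ENNReal) * μG (S v ∩ F) := by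
    intro v
    set Δ : Subgroup Γ := MulAction.stabilizer Γ v with hΔdef
    have hinj : Function.Injective
        (fun δ : Δ => (QuotientGroup.mk (δ : Γ) : Γ ⧸ Γ'.subgroupOf Γ)) := by
      intro a b hab
      have h1 : ((a : Γ)⁻¹ * (b : Γ)) ∈ Γ'.subgroupOf Γ := (QuotientGroup.eq).1 hab
      have h2 : ((a : Γ)⁻¹ * (b : Γ)) • v = v := by
        have := mul_mem (inv_mem a.2) b.2
        exact this
      have h3 : ((((a : Γ)⁻¹ * (b : Γ)) : Γ) : G) • v = v := by
        simpa [Subgroup.smul_def] using h2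
      have h4 := hfree _ (Subgroup.mem_subgroupOf.mp h1) v h3
      have h5 : (a : Γ)⁻¹ * (b : Γ) = 1 := by
        ext
        simpa using h4
      have : (a : Γ) = (b : Γ) := by
        rw [← mul_one (a : Γ), ← h5, ← mul_assoc, mul_inv_cancel, one_mul]
      exact Subtype.ext this
    have hΔfin : Finite Δ := Finite.of_injective _ hinj
    have hcard : Nat.card Δ ≤ n := Nat.card_le_card_of_injective _ hinj
    -- reindex the fundamental domain sum
    have hmemop : ∀ g : G, g ∈ Γ → MulOpposite.op g ∈ Γ.op := by
      intro g hg
      simpa [Subgroup.mem_op] using hg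
    set e1 : Γ ≃ Γ.op :=
      { toFun := fun γ => ⟨MulOpposite.op ((γ : G)⁻¹), hmemop _ (inv_mem γ.2)⟩
        invFun := fun γop => ⟨(MulOpposite.unop ((γop : Gᵐᵒᵖ)))⁻¹, by
          have h := γop.2
          rw [Subgroup.mem_op] at h
          exact inv_mem h⟩
        left_inv := fun γ => by ext; simp
        right_inv := fun γop => by ext; simp } with he1
    set P : Γ → Set G := fun γ => (e1 γ) • (T v) with hPdef
    have hPmem : ∀ (γ : Γ) (x : G), x ∈ P γ ↔ x * (γ : G) ∈ T v := by
      intro γ x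
      rw [hPdef]
      show x ∈ (e1 γ) • (T v) ↔ _
      rw [Set.mem_smul_set]
      constructor
      · rintro ⟨t, ht, rfl⟩
        have h1 : e1 γ • t = t * (γ : G)⁻¹ := rfl
        rw [h1, mul_assoc, inv_mul_cancel, mul_one]
        exact ht
      · intro hx
        refine ⟨x * (γ : G), hx, ?_⟩
        show x * (γ : G) * (γ : G)⁻¹ = x
        rw [mul_assoc, mul_inv_cancel, mul_one]
    have hPcoset : ∀ (γ δ : Γ), δ ∈ Δ → P (γ * δ) = P γ := by
      intro γ δ hδ
      have hδv : (δ : G) • v = v := hδ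
      ext x
      rw [hPmem, hPmem]
      simp only [hTdef, mem_setOf_eq, Subgroup.coe_mul, ← mul_assoc]
      rw [mul_smul, hδv]
    have hPconst : ∀ γ γ' : Γ, (QuotientGroup.mk γ : Γ ⧸ Δ) = QuotientGroup.mk γ' →
        P γ = P γ' := by
      intro γ γ' hq
      have hδ : γ⁻¹ * γ' ∈ Δ := (QuotientGroup.eq).1 hq
      have : γ * (γ⁻¹ * γ') = γ' := by rw [← mul_assoc, mul_inv_cancel, one_mul]
      rw [← this, hPcoset γ _ hδ]
    have hPsub : ∀ γ : Γ, P γ ⊆ S v := by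
      intro γ x hx
      rw [hPmem] at hx
      exact (hSiff v x).2 ⟨γ, hx⟩
    have hPopen : ∀ γ : Γ, IsOpen (P γ) := by
      intro γ
      have : P γ = (fun x => x * (γ : G)) ⁻¹' (T v) := by
        ext x; rw [hPmem]; rfl
      rw [this]
      exact (hTopen v).preimage (continuous_id.mul continuous_const)
    have hPdisj : ∀ γ γ' : Γ, ((P γ) ∩ (P γ')).Nonempty →
        (QuotientGroup.mk γ : Γ ⧸ Δ) = QuotientGroup.mk γ' := by
      intro γ γ' hne
      obtain ⟨x, hx1, hx2⟩ := hne
      rw [hPmem] at hx1 hx2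
      simp only [hTdef, mem_setOf_eq] at hx1 hx2
      rw [mul_smul] at hx1 hx2
      have hvv : (γ : G) • v = (γ' : G) • v := smul_left_cancel x (hx1.trans hx2.symm)
      rw [QuotientGroup.eq]
      have hmem : ((γ⁻¹ * γ' : Γ)) • v = v := by
        rw [Subgroup.smul_def]
        push_cast
        rw [mul_smul, ← hvv, inv_smul_smul]
      exact MulAction.mem_stabilizer_iff.mpr hmem
    -- the main computation
    haveI : Countable Γ := by
      have h := (inferInstance : TopologicalSpace.SeparableSpace Γ)
      exact TopologicalSpace.separableSpace_iff_countable.mp h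
    haveI : Countable Γ.op := Countable.of_equiv _ (Subgroup.equivOp Γ)
    have hout : ∀ L : Γ ⧸ Δ, (QuotientGroup.mk L.out : Γ ⧸ Δ) = L := fun L => Quotient.out_eq L
    have step1 : μG K = ∑' γop : Γ.op, μG (γop • (T v) ∩ F) := by
      rw [← hTK v]; exact hFdom.measure_eq_tsum (T v)
    have step2 : ∑' γop : Γ.op, μG (γop • (T v) ∩ F) = ∑' γ : Γ, μG (P γ ∩ F) :=
      (e1.tsum_eq fun γop => μG (γop • (T v) ∩ F)).symm
    set q : Γ ≃ (Γ ⧸ Δ) × Δ := Subgroup.groupEquivQuotientProdSubgroup with hq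
    have hqfst : ∀ p : (Γ ⧸ Δ) × Δ, (QuotientGroup.mk (q.symm p) : Γ ⧸ Δ) = p.1 := by
      intro p
      have := q.apply_symm_apply p
      have h1 : (q (q.symm p)).1 = p.1 := by rw [this]
      rw [← h1]
      rfl
    have step3 : ∑' γ : Γ, μG (P γ ∩ F) = ∑' p : (Γ ⧸ Δ) × Δ, μG (P (q.symm p) ∩ F) :=
      (q.symm.tsum_eq fun γ => μG (P γ ∩ F)).symm
    haveI : Fintype Δ := Fintype.ofFinite Δ
    have step4 : ∑' p : (Γ ⧸ Δ) × Δ, μG (P (q.symm p) ∩ F)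
        = (Nat.card Δ : ENNReal) * ∑' L : Γ ⧸ Δ, μG (P L.out ∩ F) := by
      have hprod : ∑' p : (Γ ⧸ Δ) × Δ, μG (P (q.symm p) ∩ F)
          = ∑' L : Γ ⧸ Δ, ∑' δ : Δ, μG (P (q.symm (L, δ)) ∩ F) :=
        ENNReal.tsum_prod (f := fun L δ => μG (P (q.symm (L, δ)) ∩ F))
      rw [hprod]
      have : ∀ L : Γ ⧸ Δ, ∑' δ : Δ, μG (P (q.symm (L, δ)) ∩ F)
          = (Nat.card Δ : ENNReal) * μG (P L.out ∩ F) := by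
        intro L
        have hLp : ∀ δ : Δ, P (q.symm (L, δ)) = P L.out := by
          intro δ
          apply hPconst
          rw [hqfst (L, δ), hout L]
        simp_rw [hLp]
        rw [tsum_fintype]
        simp [Finset.sum_const, nsmul_eq_mul, Nat.card_eq_fintype_card]
      simp_rw [this]
      rw [ENNReal.tsum_mul_left]
    have step5 : ∑' L : Γ ⧸ Δ, μG (P L.out ∩ F) ≤ μG (S v ∩ F) := by
      have hd : Pairwise (Function.onFun (AEDisjoint (μG.restrict (S v ∩ F))) fun L : Γ ⧸ Δ => P L.out) := by
        intro L L' hLL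
        have : Disjoint (P L.out) (P L'.out) := by
          rw [Set.disjoint_iff_inter_eq_empty]
          by_contra hne
          have hne' : ((P L.out) ∩ (P L'.out)).Nonempty := nonempty_iff_ne_empty.2 hne
          have := hPdisj _ _ hne'
          rw [hout, hout] at this
          exact hLL this
        exact Disjoint.aedisjoint this
      have hmble : ∀ L : Γ ⧸ Δ, NullMeasurableSet (P L.out) (μG.restrict (S v ∩ F)) :=
        fun L => ((hPopen _).measurableSet).nullMeasurableSet
      have := tsum_measure_le_measure_univ hmble hd
      rw [Measure.restrict_apply_univ] at this
      refine le_trans (le_of_eq ?_) this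
      apply tsum_congr
      intro L
      rw [Measure.restrict_apply (hPopen _).measurableSet]
      congr 1
      rw [← inter_assoc, inter_eq_self_of_subset_left (hPsub _)]
    calc μG K = ∑' γop : Γ.op, μG (γop • (T v) ∩ F) := step1
      _ = ∑' γ : Γ, μG (P γ ∩ F) := step2
      _ = ∑' p : (Γ ⧸ Δ) × Δ, μG (P (q.symm p) ∩ F) := step3
      _ = (Nat.card Δ : ENNReal) * ∑' L : Γ ⧸ Δ, μG (P L.out ∩ F) := step4
      _ ≤ (n : ENNReal) * μG (S v ∩ F) := by
          exact mul_le_mul' (by exact_mod_cast hcard) step5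
  -- choose distinct orbit representatives
  have hrep : ∃ v : ℕ → V, (∀ i, v i ∈ A) ∧ Function.Injective
      (fun i => Quotient.mk (MulAction.orbitRel Γ V) (v i)) := by
    have hemb := hAinf.natEmbedding
    have hex : ∀ i : ℕ, ∃ w : V, w ∈ A ∧
        Quotient.mk (MulAction.orbitRel Γ V) w = (hemb i).1 := by
      intro i
      obtain ⟨w, hw, he⟩ := (hemb i).2
      exact ⟨w, hw, he⟩
    choose v hvA hve using hex
    refine ⟨v, hvA, fun i j hij => ?_⟩
    apply hemb.injective
    apply Subtype.ext
    rw [← hve i, ← hve j]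
    exact hij
  obtain ⟨v, hvA, hvinj⟩ := hrep
  have hdisj : Pairwise (Function.onFun Disjoint fun i => (QuotientGroup.mk : G → G ⧸ Γ) '' (T (v i))) := by
    intro i j hij
    rw [Function.onFun, Set.disjoint_left]
    rintro x ⟨g, hg, rfl⟩ hx2
    have hgj : g ∈ S (v j) := by
      rw [← hpre (v j)]
      exact hx2
    have hgi : g ∈ S (v i) := hTS _ hg
    obtain ⟨γ, hγ⟩ := hgi
    obtain ⟨δ, hδ⟩ := hgj
    apply hij
    apply hvinj
    have horb : v i ∈ MulAction.orbit Γ (v j) := by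
      rw [MulAction.mem_orbit_iff]
      refine ⟨γ⁻¹ * δ, ?_⟩
      have hδ' : δ • v j = g⁻¹ • v₀ := hδ
      have hγ' : γ • v i = g⁻¹ • v₀ := hγ
      rw [mul_smul, hδ', ← hγ', inv_smul_smul]
    exact Quotient.sound ((MulAction.orbitRel_apply).mpr horb)
  have hterm : ∀ i : ℕ, μG K / n ≤ μ (QuotientGroup.mk '' (T (v i))) := by
    intro i
    rw [hμC]
    exact ENNReal.div_le_of_le_mul' (hlb (v i))
  have hc0 : μG K / n ≠ 0 := by
    rw [ne_eq, ENNReal.div_eq_zero_iff]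
    push_neg
    exact ⟨hK0, ENNReal.natCast_ne_top n⟩
  have hcalc : (⊤ : ENNReal) ≤ μ ((QuotientGroup.mk : G → G ⧸ Γ) '' {g : G | g⁻¹ • v₀ ∈ A}) := by
    calc (⊤ : ENNReal) = ∑' _ : ℕ, (μG K / n) :=
          (ENNReal.tsum_const_eq_top_of_ne_zero hc0).symm
      _ ≤ ∑' i, μ (QuotientGroup.mk '' (T (v i))) := ENNReal.tsum_le_tsum hterm
      _ = μ (⋃ i, (QuotientGroup.mk : G → G ⧸ Γ) '' (T (v i))) :=
          (measure_iUnion hdisj fun i => hCmeas (v i)).symm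
      _ ≤ _ := measure_mono (iUnion_subset fun i => image_mono (hTE (v i) (hvA i)))
  exact top_le_iff.mp hcalc

theorem stmt13 {G V : Type*} [Group G] [TopologicalSpace G] [IsTopologicalGroup G]
    [LocallyCompactSpace G] [SecondCountableTopology G]
    [MeasurableSpace G] [BorelSpace G]
    (μG : Measure G) [μG.IsHaarMeasure] [μG.IsMulRightInvariant]
    (X : SimpleGraph V) (hconn : X.Connected) (hlf : X.LocallyFinite)
    [MulAction G V]
    (hauto : ∀ (g : G) (v w : V), X.Adj v w → X.Adj (g • v) (g • w))
    [MulAction.IsPretransitive G V]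
    (hstab : ∀ v : V, IsCompact {g : G | g • v = v} ∧ IsOpen {g : G | g • v = v})
    (Γ : Subgroup G) [DiscreteTopology Γ]
    (Γ' : Subgroup G) (hle : Γ' ≤ Γ) (hfi : Γ'.relIndex Γ ≠ 0)
    (hfree : ∀ γ ∈ Γ', ∀ v : V, γ • v = v → γ = 1)
    (F : Set G) (hFmeas : MeasurableSet F)
    (hFdom : IsFundamentalDomain Γ.op F μG)
    (μ : Measure (G ⧸ Γ))
    (hμ : μ = Measure.map (QuotientGroup.mk : G → G ⧸ Γ) (μG.restrict F))
    [SMulInvariantMeasure G (G ⧸ Γ) μ]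
    (v₀ : V) (Atil : Set V) (hinv : ∀ γ : Γ, (γ : G) • Atil = Atil)
    (hAinf : ((Quotient.mk (MulAction.orbitRel Γ V)) '' Atil).Infinite)
    (hAcinf : ((Quotient.mk (MulAction.orbitRel Γ V)) '' Atilᶜ).Infinite) :
    μ ((QuotientGroup.mk : G → G ⧸ Γ) '' {g : G | g⁻¹ • v₀ ∈ Atil}) = ⊤ ∧
    μ (((QuotientGroup.mk : G → G ⧸ Γ) '' {g : G | g⁻¹ • v₀ ∈ Atil})ᶜ) = ⊤ := by
  constructor
  · exact stmt13_aux μG hstab Γ Γ' hle hfi hfree F hFmeas hFdom μ hμ v₀ Atil hAinf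
  · have h2 : μ ((QuotientGroup.mk : G → G ⧸ Γ) '' {g : G | g⁻¹ • v₀ ∈ Atilᶜ}) = ⊤ :=
      stmt13_aux μG hstab Γ Γ' hle hfi hfree F hFmeas hFdom μ hμ v₀ Atilᶜ hAcinf
    have hsub : (QuotientGroup.mk : G → G ⧸ Γ) '' {g : G | g⁻¹ • v₀ ∈ Atilᶜ} ⊆
        ((QuotientGroup.mk : G → G ⧸ Γ) '' {g : G | g⁻¹ • v₀ ∈ Atil})ᶜ := by
      rintro x ⟨g, hg, rfl⟩
      intro hmem
      obtain ⟨t, ht, hq⟩ := hmem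
      have hγ : t⁻¹ * g ∈ Γ := (QuotientGroup.eq).1 hq
      simp only [mem_setOf_eq, mem_compl_iff] at hg ht
      apply hg
      have hgeq : g⁻¹ • v₀ = ((t⁻¹ * g)⁻¹ : G) • (t⁻¹ • v₀) := by
        rw [← mul_smul]
        congr 1
        group
      rw [hgeq, ← hinv (⟨t⁻¹ * g, hγ⟩ : Γ)⁻¹]
      exact Set.smul_mem_smul_set ht
    have := measure_mono (μ := μ) hsub
    rw [h2] at this
    exact top_le_iff.mp this
end

section
/- Let Γ be a countable discrete group generated by a finite symmetric set S, and let Λ ≤ Γ be a subgroup. Let ℓ²(Γ/Λ) denote the Hilbert space of square-summable complex functions on the left-coset space Γ/Λ, with Γ acting unitarily by (γ·f)(xΛ) = f(γ⁻¹xΛ). Assume: (i) there exist a finite subset Q ⊆ Γ and a constant C > 0 such that ‖f‖₂ ≤ C · max_{γ∈Q} ‖γ·f − f‖₂ for every f ∈ ℓ²(Γ/Λ) (i.e., Λ is not coamenable in Γ); and (ii) every 1-cocycle c : Γ → ℓ²(Γ/Λ) is a 1-coboundary. Then the Schreier graph Sch(Γ, Λ, S) has exactly one end: its space of ends is nonempty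 and has exactly one element. -/
open MeasureTheory Set Pointwise

/-- The Schreier graph `Sch(Γ, Λ, S)`: vertices are the left cosets `Γ ⧸ Λ`, with two distinct
cosets `x` and `y` adjacent if and only if `y = s • x` for some `s ∈ S`. -/
def schreierGraph {Γ : Type*} [Group Γ] (Λ : Subgroup Γ) (S : Set Γ)
    (hS : ∀ s ∈ S, s⁻¹ ∈ S) : SimpleGraph (Γ ⧸ Λ) where
  Adj x y := x ≠ y ∧ ∃ s ∈ S, y = s • x
  symm := by
    constructor
    rintro x y ⟨hxy, s, hs, rfl⟩
    exact ⟨hxy.symm, s⁻¹, hS s hs, (inv_smul_smul s x).symm⟩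
  loopless := by
    constructor
    rintro x ⟨h, -⟩
    exact h rfl

section Aux

variable {Γ : Type*} [Group Γ] {Λ : Subgroup Γ}

/-- The left multiplication action of `Γ` on `Γ ⧸ Λ` is transitive. -/
lemma schreier_exists_smul_eq (x y : Γ ⧸ Λ) : ∃ γ : Γ, γ • x = y := by
  induction x using QuotientGroup.induction_on with
  | H a =>
    induction y using QuotientGroup.induction_on with
    | H b =>
      refine ⟨b * a⁻¹, ?_⟩
      rw [MulAction.Quotient.smul_mk, smul_eq_mul, inv_mul_cancel_right]

lemma schreier_reachable {S : Finset Γ} (hSsym : ∀ s ∈ (S : Set Γ), s⁻¹ ∈ (S : Set Γ))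
    (hSgen : Subgroup.closure (S : Set Γ) = ⊤) (γ : Γ) :
    ∀ x : Γ ⧸ Λ, (schreierGraph Λ (S : Set Γ) hSsym).Reachable x (γ • x) := by
  have hγ : γ ∈ Subgroup.closure (S : Set Γ) := hSgen ▸ Subgroup.mem_top γ
  refine Subgroup.closure_induction (fun s hs x => ?_) (fun x => by
      rw [one_smul]) (fun a b _ _ ha hb x => ?_) (fun a _ ha x => ?_) hγ
  · by_cases h : s • x = x
    · rw [h]
    · exact (SimpleGraph.Adj.reachable ⟨fun h' => h h'.symm, s, hs, rfl⟩)
  · rw [mul_smul]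
    exact (hb x).trans (ha (b • x))
  · have := ha (a⁻¹ • x)
    rw [smul_inv_smul] at this
    exact this.symm

end Aux

universe u

lemma schreier_end_nonempty {V : Type u} (G : SimpleGraph V) [G.LocallyFinite]
    [Fact G.Preconnected] [Infinite V] : G.end.Nonempty := by
  classical
  haveI : ∀ K : (Finset V)ᵒᵖ, Finite (G.componentComplFunctor.obj K) :=
    fun K => G.componentCompl_finite K.unop
  haveI : ∀ K : (Finset V)ᵒᵖ, Nonempty (G.componentComplFunctor.obj K) :=
    fun K => G.componentCompl_nonempty_of_infinite K.unop
  exact nonempty_sections_of_finite_inverse_system G.componentComplFunctor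

lemma schreier_end_infinite {V : Type u} {G : SimpleGraph V} (e : G.end)
    (K : (Finset V)ᵒᵖ) : ((e.val) K).supp.Infinite := by
  refine (e.val K).infinite_iff_in_all_ranges.mpr (fun L h => ?_)
  change Opposite.unop K ⊆ Opposite.unop (Opposite.op L) at h
  exact ⟨e.val (Opposite.op L), (e.prop (CategoryTheory.opHomOfLE h))⟩


theorem stmt16 {Γ : Type*} [Group Γ] [Countable Γ]
    (S : Finset Γ) (hSsym : ∀ s ∈ (S : Set Γ), s⁻¹ ∈ (S : Set Γ))
    (hSgen : Subgroup.closure (S : Set Γ) = ⊤)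
    (Λ : Subgroup Γ)
    (hgap : ∃ Q : Finset Γ, ∃ C : ℝ, 0 < C ∧ ∀ f : Γ ⧸ Λ → ℂ,
      Summable (fun x => ‖f x‖ ^ 2) →
      Real.sqrt (∑' x, ‖f x‖ ^ 2)
        ≤ C * ⨆ γ : Q, Real.sqrt (∑' x, ‖f ((γ : Γ)⁻¹ • x) - f x‖ ^ 2))
    (hcoboundary : ∀ c : Γ → Γ ⧸ Λ → ℂ, (∀ γ, Summable (fun x => ‖c γ x‖ ^ 2)) →
      (∀ γ δ : Γ, ∀ x, c (γ * δ) x = c γ x + c δ (γ⁻¹ • x)) →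
      ∃ ξ : Γ ⧸ Λ → ℂ, Summable (fun x => ‖ξ x‖ ^ 2) ∧ ∀ γ x, c γ x = ξ x - ξ (γ⁻¹ • x)) :
    (schreierGraph Λ (S : Set Γ) hSsym).end.Nonempty ∧
    (schreierGraph Λ (S : Set Γ) hSsym).end.Subsingleton := by
  classical
  set G := schreierGraph Λ (S : Set Γ) hSsym with hG
  haveI : Fact G.Preconnected := ⟨by
    intro x y
    obtain ⟨γ, rfl⟩ := schreier_exists_smul_eq x y
    exact schreier_reachable hSsym hSgen γ x⟩
  haveI : G.LocallyFinite := by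
    intro v
    apply Set.Finite.fintype
    apply (S.finite_toSet.image (· • v)).subset
    rintro y ⟨-, s, hs, rfl⟩
    exact ⟨s, hs, rfl⟩
  -- The coset space is infinite thanks to the spectral gap hypothesis.
  haveI : Infinite (Γ ⧸ Λ) := by
    rw [← not_finite_iff_infinite]
    intro hfin
    obtain ⟨Q, C, hC, hgap'⟩ := hgap
    have hs : Summable (fun _ : Γ ⧸ Λ => ‖(1 : ℂ)‖ ^ 2) := Summable.of_finite
    have h0 := hgap' (fun _ => 1) hs
    have hsup : (⨆ _ : Q, Real.sqrt (∑' _ : Γ ⧸ Λ, ‖(1 : ℂ) - 1‖ ^ 2)) = 0 := by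
      simp only [sub_self, norm_zero]
      rcases isEmpty_or_nonempty Q with h | h
      · exact Real.iSup_of_isEmpty _
      · simp
    rw [hsup, mul_zero] at h0
    have hpos : 0 < ∑' _ : Γ ⧸ Λ, ‖(1 : ℂ)‖ ^ 2 := by
      refine Summable.tsum_pos hs (fun _ => by positivity) ((1 : Γ) : Γ ⧸ Λ) ?_
      simp
    exact absurd h0 (not_le.mpr (Real.sqrt_pos.mpr hpos))
  refine ⟨?_, ?_⟩
  · exact schreier_end_nonempty G
  -- One end: suppose two sections differ.
  intro s1 hs1 s2 hs2
  by_contra hne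
  have hKex : ∃ K, s1 K ≠ s2 K := by
    by_contra h
    push_neg at h
    exact hne (funext h)
  obtain ⟨K, hK⟩ := hKex
  set A : Set (Γ ⧸ Λ) := (s1 K).supp with hA
  have hAinf : A.Infinite := schreier_end_infinite (G := G) ⟨s1, hs1⟩ K
  have hBinf : ((s2 K).supp).Infinite := schreier_end_infinite (G := G) ⟨s2, hs2⟩ K
  have hdisj : ∀ x ∈ (s2 K).supp, x ∉ A := by
    rintro x ⟨h2, hmk2⟩ ⟨h1, hmk1⟩
    exact hK (by rw [← hmk1, ← hmk2])
  -- adjacent vertices outside K are on the same side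
  have hadj : ∀ x y : Γ ⧸ Λ, x ∉ (K.unop : Set (Γ ⧸ Λ)) → y ∉ (K.unop : Set (Γ ⧸ Λ)) →
      G.Adj x y → (x ∈ A ↔ y ∈ A) := by
    intro x y hx hy hxy
    constructor
    · intro hxA
      exact SimpleGraph.ComponentCompl.mem_of_adj x y hxA hy hxy
    · intro hyA
      exact SimpleGraph.ComponentCompl.mem_of_adj y x hyA hx hxy.symm
  -- A is almost invariant
  have badFin : ∀ γ : Γ, {x : Γ ⧸ Λ | ¬ (x ∈ A ↔ γ⁻¹ • x ∈ A)}.Finite := by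
    intro γ
    have hγ : γ ∈ Subgroup.closure (S : Set Γ) := hSgen ▸ Subgroup.mem_top γ
    refine Subgroup.closure_induction (fun s hs => ?_) ?_
      (fun a b _ _ ha hb => ?_) (fun a _ ha => ?_) hγ
    · -- generators
      refine ((K.unop.finite_toSet).union ((K.unop.finite_toSet).smul_set (a := s))).subset ?_
      intro x hx
      by_contra hxK
      simp only [Set.mem_union, Set.mem_smul_set_iff_inv_smul_mem] at hxK
      push_neg at hxK
      apply hx
      by_cases he : s⁻¹ • x = x
      · rw [he]
      · exact hadj x (s⁻¹ • x) hxK.1 hxK.2 ⟨fun h' => he h'.symm, s⁻¹, hSsym s hs, rfl⟩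
    · -- identity
      refine Set.Finite.subset (Set.finite_empty) ?_
      intro x hx
      exact absurd (by rw [inv_one, one_smul]) hx
    · -- products
      refine (ha.union (hb.smul_set (a := a))).subset ?_
      intro x hx
      by_contra h
      simp only [Set.mem_union, Set.mem_smul_set_iff_inv_smul_mem, Set.mem_setOf_eq,
        not_or, not_not] at h
      apply hx
      rw [mul_inv_rev, mul_smul]
      exact h.1.trans h.2
    · -- inverses
      refine (ha.smul_set (a := a⁻¹)).subset ?_
      intro x hx
      rw [Set.mem_smul_set_iff_inv_smul_mem, inv_inv]
      simp only [Set.mem_setOf_eq, inv_smul_smul]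
      rw [Set.mem_setOf_eq, inv_inv] at hx
      exact fun h => hx h.symm
  -- the associated cocycle
  set f1 : (Γ ⧸ Λ) → ℂ := fun x => if x ∈ A then 1 else 0 with hf1
  have hsum : ∀ γ : Γ, Summable (fun x => ‖f1 x - f1 (γ⁻¹ • x)‖ ^ 2) := by
    intro γ
    apply summable_of_ne_finset_zero (s := (badFin γ).toFinset)
    intro x hx
    simp only [Set.Finite.mem_toFinset, Set.mem_setOf_eq, not_not] at hx
    have : f1 x = f1 (γ⁻¹ • x) := by
      simp only [hf1]
      exact if_congr hx rfl rfl
    rw [this, sub_self, norm_zero]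
    norm_num
  have hco : ∀ γ δ : Γ, ∀ x, f1 x - f1 ((γ * δ)⁻¹ • x)
      = (f1 x - f1 (γ⁻¹ • x)) + (f1 (γ⁻¹ • x) - f1 (δ⁻¹ • (γ⁻¹ • x))) := by
    intro γ δ x
    rw [mul_inv_rev, mul_smul]
    ring
  obtain ⟨ξ, hξsum, hξ⟩ := hcoboundary (fun γ x => f1 x - f1 (γ⁻¹ • x)) hsum hco
  -- f1 - ξ is constant
  have hconst : ∀ x y : Γ ⧸ Λ, f1 x - ξ x = f1 y - ξ y := by
    intro x y
    obtain ⟨γ, hγ⟩ := schreier_exists_smul_eq y x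
    have h2 : γ⁻¹ • x = y := by rw [← hγ, inv_smul_smul]
    have h3 := hξ γ x
    simp only [h2] at h3
    linear_combination h3
  -- a value attained on an infinite set must be 0
  have hzero : ∀ (T : Set (Γ ⧸ Λ)), T.Infinite → ∀ v : ℂ, (∀ t ∈ T, ξ t = v) → v = 0 := by
    intro T hT v hv
    by_contra hvne
    have hε : (0 : ℝ) < ‖v‖ ^ 2 := pow_pos (norm_pos_iff.mpr hvne) 2
    have hev : ∀ᶠ x in Filter.cofinite, ‖ξ x‖ ^ 2 < ‖v‖ ^ 2 :=
      hξsum.tendsto_cofinite_zero.eventually_lt_const hε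
    rw [Filter.eventually_cofinite] at hev
    refine hT (hev.subset ?_)
    intro t ht
    simp only [Set.mem_setOf_eq, not_lt, hv t ht, le_refl]
  obtain ⟨x0, hx0⟩ := hAinf.nonempty
  obtain ⟨y0, hy0⟩ := hBinf.nonempty
  have hy0A : y0 ∉ A := hdisj y0 hy0
  have hAconst : ∀ a ∈ A, ξ a = ξ x0 := by
    intro a ha
    have := hconst a x0
    simp only [hf1, if_pos ha, if_pos hx0] at this
    linear_combination -this
  have hBconst : ∀ b ∈ (s2 K).supp, ξ b = ξ y0 := by
    intro b hb
    have := hconst b y0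
    simp only [hf1, if_neg (hdisj b hb), if_neg hy0A] at this
    linear_combination -this
  have hx0z : ξ x0 = 0 := hzero A hAinf (ξ x0) hAconst
  have hy0z : ξ y0 = 0 := hzero _ hBinf (ξ y0) hBconst
  have key := hconst x0 y0
  simp only [hf1, if_pos hx0, if_neg hy0A, hx0z, hy0z, sub_zero] at key
  exact one_ne_zero key
end

section
/- Let G be a unimodular locally compact second countable group with Haar measure μ_G, let Γ ≤ G be a discrete subgroup, let F ⊆ G be a Borel fundamental domain for the right translation action of Γ on G, and let μ denote the resulting G-invariant quotient measure on G/Γ. Let U ⊆ G be an open neighborhood of the identity with μ_G(U ∩ F) > 0 such that for every x ∈ G/Γ the map g ↦ g·x is injective on U. Then for every x ∈ G/Γ one has μ(U·x) ≥ μ_G(U ∩ F); in particular the μ-measure of the U-orbit patch U·x is bounded below by a positive constant independent of x. -/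
open MeasureTheory Set Pointwise

theorem stmt19 {G : Type*} [Group G] [TopologicalSpace G] [IsTopologicalGroup G]
    [LocallyCompactSpace G] [SecondCountableTopology G]
    [MeasurableSpace G] [BorelSpace G]
    (μG : Measure G) [μG.IsHaarMeasure] [μG.IsMulRightInvariant]
    (Γ : Subgroup G) [DiscreteTopology Γ]
    (F : Set G) (hFmeas : MeasurableSet F)
    (hFdom : IsFundamentalDomain Γ.op F μG)
    (μ : Measure (G ⧸ Γ))
    (hμ : μ = Measure.map (QuotientGroup.mk : G → G ⧸ Γ) (μG.restrict F))
    [SMulInvariantMeasure G (G ⧸ Γ) μ]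
    (U : Set G) (hUopen : IsOpen U) (hUone : (1 : G) ∈ U)
    (hUF : 0 < μG (U ∩ F))
    (hUinj : ∀ x : G ⧸ Γ, Set.InjOn (fun g => g • x) U) :
    ∀ x : G ⧸ Γ, μG (U ∩ F) ≤ μ ((fun g => g • x) '' U) := by
  -- Γ is countable
  have hΓcount : Countable Γ := by
    have : TopologicalSpace.SeparableSpace Γ := TopologicalSpace.SecondCountableTopology.to_separableSpace
    exact (TopologicalSpace.separableSpace_iff_countable).mp this
  have hΓopcount : Countable Γ.op := Countable.of_equiv _ Γ.equivOp
  intro x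
  obtain ⟨g₀, rfl⟩ := QuotientGroup.mk_surjective x
  set V : Set G := (fun g => g * g₀) '' U with hV
  have hVeq : V = (fun g => g * g₀⁻¹) ⁻¹' U := by
    ext a
    simp only [hV, mem_image, mem_preimage]
    constructor
    · rintro ⟨u, hu, rfl⟩; simpa using hu
    · intro h; exact ⟨a * g₀⁻¹, h, by group⟩
  have hVopen : IsOpen V := by
    rw [hVeq]; exact hUopen.preimage (continuous_mul_right _)
  -- the image set is mk '' V
  have himg : (fun g => g • (QuotientGroup.mk g₀ : G ⧸ Γ)) '' U = QuotientGroup.mk '' V := by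
    rw [hV, image_image]
    exact image_congr fun u _ => (MulAction.Quotient.smul_mk Γ u g₀)
  -- preimage of the image
  have hpre : (QuotientGroup.mk : G → G ⧸ Γ) ⁻¹' (QuotientGroup.mk '' V) =
      ⋃ γ : Γ.op, γ • V := by
    ext a
    simp only [mem_preimage, mem_image, mem_iUnion]
    constructor
    · rintro ⟨v, hv, hva⟩
      have : v⁻¹ * a ∈ Γ := QuotientGroup.eq.mp hva
      refine ⟨⟨MulOpposite.op (v⁻¹ * a), Subgroup.mem_op.mpr (by simpa using this)⟩, ?_⟩
      refine ⟨v, hv, ?_⟩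
      show v * (v⁻¹ * a) = a
      group
    · rintro ⟨γ, v, hv, rfl⟩
      refine ⟨v, hv, ?_⟩
      show (QuotientGroup.mk v : G ⧸ Γ) = QuotientGroup.mk (v * (γ : Gᵐᵒᵖ).unop)
      exact QuotientGroup.eq.mpr (by simpa using Subgroup.mem_op.mp γ.2)
  -- disjointness of the translates γ • V
  have hdisj : Pairwise (Function.onFun Disjoint fun γ : Γ.op => γ • V) := by
    intro γ₁ γ₂ hne
    rw [Function.onFun, Set.disjoint_left]
    rintro a ⟨v₁, ⟨u₁, hu₁, rfl⟩, rfl⟩ ⟨v₂, ⟨u₂, hu₂, rfl⟩, heq⟩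
    have heq' : u₂ * g₀ * (γ₂ : Gᵐᵒᵖ).unop = u₁ * g₀ * (γ₁ : Gᵐᵒᵖ).unop := heq
    have hγ1 : (γ₁ : Gᵐᵒᵖ).unop ∈ Γ := Subgroup.mem_op.mp γ₁.2
    have hγ2 : (γ₂ : Gᵐᵒᵖ).unop ∈ Γ := Subgroup.mem_op.mp γ₂.2
    have hmk : u₁ • (QuotientGroup.mk g₀ : G ⧸ Γ) = u₂ • (QuotientGroup.mk g₀ : G ⧸ Γ) := by
      rw [MulAction.Quotient.smul_mk, MulAction.Quotient.smul_mk]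
      apply QuotientGroup.eq.mpr
      have h : (u₁ • g₀)⁻¹ * (u₂ • g₀) = (γ₁ : Gᵐᵒᵖ).unop * ((γ₂ : Gᵐᵒᵖ).unop)⁻¹ := by
        have h2 : u₂ * g₀ = u₁ * g₀ * (γ₁ : Gᵐᵒᵖ).unop * ((γ₂ : Gᵐᵒᵖ).unop)⁻¹ := by
          rw [← heq']; group
        simp only [smul_eq_mul, h2]; group
      rw [h]
      exact Γ.mul_mem hγ1 (Γ.inv_mem hγ2)
    have hu : u₁ = u₂ := hUinj (QuotientGroup.mk g₀) hu₁ hu₂ hmk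
    subst hu
    have h3 : (γ₂ : Gᵐᵒᵖ).unop = (γ₁ : Gᵐᵒᵖ).unop := mul_left_cancel heq'
    exact absurd (Subtype.ext (MulOpposite.unop_injective h3)).symm hne
  -- measurability of each translate
  have htransmeas : ∀ γ : Γ.op, MeasurableSet ((γ : Γ.op) • V) := by
    intro γ
    have : (γ : Gᵐᵒᵖ) • V = (fun a => a * ((γ : Gᵐᵒᵖ).unop)⁻¹) ⁻¹' V := by
      ext a
      simp only [mem_smul_set, mem_preimage]
      constructor
      · rintro ⟨v, hv, rfl⟩
        rw [MulOpposite.smul_eq_mul_unop]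
        simpa using hv
      · intro h
        exact ⟨a * ((γ : Gᵐᵒᵖ).unop)⁻¹, h, by rw [MulOpposite.smul_eq_mul_unop]; group⟩
    show MeasurableSet ((γ : Gᵐᵒᵖ) • V)
    rw [this]
    exact (hVopen.preimage (continuous_mul_right _)).measurableSet
  have hpremeas : MeasurableSet ((QuotientGroup.mk : G → G ⧸ Γ) ⁻¹' (QuotientGroup.mk '' V)) := by
    rw [hpre]; exact MeasurableSet.iUnion htransmeas
  have hSmeas : MeasurableSet (QuotientGroup.mk '' V : Set (G ⧸ Γ)) :=
    measurableSet_quotient.mpr hpremeas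
  -- compute the measure
  have hcalc : μ (QuotientGroup.mk '' V) = μG V := by
    rw [hμ, Measure.map_apply
        (show Measurable (QuotientGroup.mk : G → G ⧸ Γ) from measurable_quotient_mk'') hSmeas,
      Measure.restrict_apply hpremeas, hpre, iUnion_inter]
    rw [measure_iUnion (hdisj.mono fun γ₁ γ₂ h => h.mono inter_subset_left inter_subset_left)
      (fun γ => (htransmeas γ).inter hFmeas)]
    exact (hFdom.measure_eq_tsum V).symm
  have hVU : μG V = μG U := by
    rw [hVeq]
    exact measure_preimage_mul_right μG g₀⁻¹ U
  rw [himg, hcalc, hVU]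
  exact measure_mono inter_subset_left
end
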